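/- arXiv:1905.05745 — 4 statements merged into one kernel-verified Lean document; each statement's English description precedes it below -/
import Mathlib

section
/- Let K be a complete discretely valued field with valuation v, residue field a finite field F of odd characteristic, and let a be a unit of the valuation ring of K. Then the Hilbert symbol (a,b) = -1 if and only if v(b) is odd and the residue of a is a nonsquare in F. -/
open Quaternion HahnSeries IsDedekindDomain Polynomial Multiplicative
noncomputable section
set_option maxHeartbeats 1000000
set_option synthInstance.maxHeartbeats 400000
set_option linter.unusedSectionVars false
local notation "ℤₘ₀" => WithZero (Multiplicative ℤ)

namespace HilbAux


lemma two_ne_zero_of_odd_card {F : Type*} [Field F] [Finite F] (hodd : Odd (Nat.card F)) :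
    (2 : F) ≠ 0 := by
  have : Fintype F := Fintype.ofFinite F
  have hcard : Fintype.card F % 2 = 1 := by
    rw [← Nat.card_eq_fintype_card]; exact Nat.odd_iff.mp hodd
  intro h2
  have hchar : ringChar F = 2 := by
    have hdvd : ringChar F ∣ 2 := ringChar.dvd (by push_cast; exact h2)
    rcases (Nat.dvd_prime Nat.prime_two).mp hdvd with h1 | h1
    · exfalso
      haveI hc : CharP F 1 := ringChar.eq_iff.mp h1
      have h10 : ((1 : ℕ) : F) = 0 := CharP.cast_eq_zero F 1
      rw [Nat.cast_one] at h10
      exact one_ne_zero h10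
    · exact h1
  rw [FiniteField.even_card_iff_char_two.mp hchar] at hcard
  omega

lemma finite_field_rep {F : Type*} [Field F] [Finite F] (hodd : Odd (Nat.card F))
    (abar u : F) (ha : abar ≠ 0) (hu : u ≠ 0) :
    ∃ w x : F, w ^ 2 - abar * x ^ 2 = u := by
  have : Fintype F := Fintype.ofFinite F
  have hcard : Fintype.card F % 2 = 1 := by
    rw [← Nat.card_eq_fintype_card]; exact Nat.odd_iff.mp hodd
  have hdeg1 : degree (X ^ 2 - Polynomial.C u : F[X]) = 2 :=
    degree_X_pow_sub_C (by norm_num) u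
  have hdeg2 : degree (Polynomial.C (-abar) * X ^ 2 : F[X]) = 2 := by
    rw [degree_C_mul_X_pow 2 (neg_ne_zero.mpr ha)]
    rfl
  obtain ⟨w, x, hwx⟩ := FiniteField.exists_root_sum_quadratic hdeg1 hdeg2 hcard
  refine ⟨w, x, ?_⟩
  simp only [eval_sub, eval_pow, eval_X, eval_C, eval_mul] at hwx
  linear_combination hwx

section Quat
variable {K : Type} [Field K] (c₁ c₂ : K)

def qnorm (x : ℍ[K, c₁, c₂]) : K :=
  x.re ^ 2 - c₁ * x.imI ^ 2 - c₂ * x.imJ ^ 2 + c₁ * c₂ * x.imK ^ 2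

variable {c₁ c₂}

lemma mul_star_eq (x : ℍ[K, c₁, c₂]) :
    x * star x = (⟨qnorm c₁ c₂ x, 0, 0, 0⟩ : ℍ[K, c₁, c₂]) := by
  ext <;> simp [qnorm] <;> ring

lemma star_mul_eq (x : ℍ[K, c₁, c₂]) :
    star x * x = (⟨qnorm c₁ c₂ x, 0, 0, 0⟩ : ℍ[K, c₁, c₂]) := by
  ext <;> simp [qnorm] <;> ring

lemma isUnit_of_qnorm_ne_zero {x : ℍ[K, c₁, c₂]} (h : qnorm c₁ c₂ x ≠ 0) : IsUnit x := by
  set y : ℍ[K, c₁, c₂] := (qnorm c₁ c₂ x)⁻¹ • star x with hy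
  have hxy : x * y = 1 := by
    rw [hy, mul_smul_comm, mul_star_eq]
    ext <;> simp [inv_mul_cancel₀ h]
  have hyx : y * x = 1 := by
    rw [hy, smul_mul_assoc, star_mul_eq]
    ext <;> simp [inv_mul_cancel₀ h]
  exact ⟨⟨x, y, hxy, hyx⟩, rfl⟩

lemma not_isUnit_of_qnorm_eq_zero {x : ℍ[K, c₁, c₂]} (hx : x ≠ 0) (h : qnorm c₁ c₂ x = 0) :
    ¬IsUnit x := by
  rintro ⟨u, rfl⟩
  have h0 : (u : ℍ[K, c₁, c₂]) * star (u : ℍ[K, c₁, c₂]) = 0 := by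
    rw [mul_star_eq, h]
    ext <;> simp
  have hstar : star (u : ℍ[K, c₁, c₂]) = 0 := by
    have := congrArg (fun z => (↑u⁻¹ : ℍ[K, c₁, c₂]) * z) h0
    simpa [← mul_assoc] using this
  apply hx
  have hre := congrArg QuaternionAlgebra.re hstar
  have hI := congrArg QuaternionAlgebra.imI hstar
  have hJ := congrArg QuaternionAlgebra.imJ hstar
  have hK := congrArg QuaternionAlgebra.imK hstar
  simp only [QuaternionAlgebra.re_star, QuaternionAlgebra.imI_star, QuaternionAlgebra.imJ_star,
    QuaternionAlgebra.imK_star, neg_eq_zero] at hre hI hJ hK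
  ext <;> simp_all

end Quat

variable {K : Type} [Field K] [Valued K ℤₘ₀]

local notation "O" => (Valued.v.valuationSubring : ValuationSubring K)

lemma isUnit_iff (x : O) : IsUnit x ↔ Valued.v (x : K) = 1 := by
  constructor
  · rintro ⟨u, rfl⟩
    have h1 : ((u * u⁻¹ : Oˣ) : O) = 1 := by simp
    have h2 : (((u : O) : K) * (((u⁻¹ : Oˣ) : O) : K)) = 1 := by
      exact_mod_cast congrArg (fun z : O => (z : K)) h1
    have := congrArg Valued.v h2
    rw [map_mul, map_one] at this
    have hx : Valued.v ((u : O) : K) ≤ 1 := (u : O).2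
    have hy : Valued.v (((u⁻¹ : Oˣ) : O) : K) ≤ 1 := ((u⁻¹ : Oˣ) : O).2
    by_contra hne
    have hlt : Valued.v ((u : O) : K) < 1 := lt_of_le_of_ne hx hne
    have : Valued.v ((u : O) : K) * Valued.v (((u⁻¹ : Oˣ) : O) : K) < 1 :=
      lt_of_le_of_lt (mul_le_mul_right hy _) (by simpa using hlt)
    exact absurd this.ne (by rw [‹Valued.v ((u : O) : K) * Valued.v (((u⁻¹ : Oˣ) : O) : K) = 1›]; simp)
  · intro hx
    have hx0 : (x : K) ≠ 0 := by
      intro h; rw [h] at hx; simp at hx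
    have hinv : Valued.v ((x : K)⁻¹) ≤ 1 := by
      rw [map_inv₀, hx]; simp
    refine IsUnit.of_mul_eq_one (a := x) ⟨(x : K)⁻¹, hinv⟩ ?_
    ext
    push_cast
    exact mul_inv_cancel₀ hx0

lemma residue_eq_zero_iff (x : O) :
    IsLocalRing.residue O x = 0 ↔ Valued.v (x : K) < 1 := by
  rw [IsLocalRing.residue_eq_zero_iff, IsLocalRing.mem_maximalIdeal,
    mem_nonunits_iff, isUnit_iff]
  exact ⟨fun h => lt_of_le_of_ne x.2 h, fun h => h.ne⟩

lemma residue_ne_zero_iff (x : O) :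
    IsLocalRing.residue O x ≠ 0 ↔ Valued.v (x : K) = 1 := by
  rw [ne_eq, residue_eq_zero_iff, not_lt]
  exact ⟨fun h => le_antisymm x.2 h, fun h => h.ge⟩



lemma exists_int_val {b : K} (hb : b ≠ 0) :
    ∃ n : ℤ, Valued.v b = ((Multiplicative.ofAdd n : Multiplicative ℤ) : ℤₘ₀) := by
  have : Valued.v b ≠ 0 := by simpa using hb
  obtain ⟨u, hu⟩ := WithZero.ne_zero_iff_exists.mp this
  exact ⟨Multiplicative.toAdd u, by rw [← hu]; norm_cast⟩

lemma val_zpow {x : K} {n : ℤ} (hx : Valued.v x = ((Multiplicative.ofAdd n : Multiplicative ℤ) : ℤₘ₀))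
    (m : ℤ) :
    Valued.v (x ^ m) = ((Multiplicative.ofAdd (m * n) : Multiplicative ℤ) : ℤₘ₀) := by
  rw [map_zpow₀, hx, ← WithZero.coe_zpow, ← ofAdd_zsmul, smul_eq_mul]

variable {π : K} (hπ : Valued.v π = ((Multiplicative.ofAdd (-1 : ℤ) : Multiplicative ℤ) : ℤₘ₀))
include hπ

lemma pi_ne_zero : π ≠ 0 := by
  intro h
  rw [h] at hπ
  simp at hπ

/-- π as an element of O -/
def piO : O := ⟨π, by rw [Valuation.mem_valuationSubring_iff, hπ]; exact_mod_cast (by decide : (ofAdd (-1:ℤ)) ≤ (1 : Multiplicative ℤ))⟩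

lemma coe_piO : ((piO hπ : O) : K) = π := rfl

lemma maxIdeal_eq : IsLocalRing.maximalIdeal O = Ideal.span {piO hπ} := by
  ext x
  rw [IsLocalRing.mem_maximalIdeal, mem_nonunits_iff, isUnit_iff, Ideal.mem_span_singleton]
  constructor
  · intro h
    have hx1 : Valued.v (x : K) < 1 := lt_of_le_of_ne x.2 h
    have hle : Valued.v (x : K) ≤ ((Multiplicative.ofAdd (-1 : ℤ) : Multiplicative ℤ) : ℤₘ₀) := by
      rcases eq_or_ne (x : K) 0 with h0 | h0
      · rw [h0]; simp
      · obtain ⟨n, hn⟩ := exists_int_val h0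
        rw [hn] at hx1 ⊢
        have h2 : (Multiplicative.ofAdd n) < (Multiplicative.ofAdd (0:ℤ)) :=
          WithZero.coe_lt_coe.mp (by exact_mod_cast hx1)
        have h3 : n < 0 := Multiplicative.ofAdd_lt.mp h2
        exact WithZero.coe_le_coe.mpr (Multiplicative.ofAdd_le.mpr (by omega))
    refine ⟨⟨(x : K) / π, ?_⟩, ?_⟩
    · rw [Valuation.mem_valuationSubring_iff, map_div₀, hπ]
      rw [div_le_one₀ (zero_lt_iff.mpr (by exact WithZero.coe_ne_zero))]
      exact hle
    · ext
      push_cast [coe_piO]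
      field_simp [pi_ne_zero hπ]
  · rintro ⟨y, rfl⟩
    intro h
    have hcoe : ((piO hπ * y : O) : K) = π * (y : K) := by push_cast [coe_piO]; ring
    have hval : (1 : ℤₘ₀) = Valued.v π * Valued.v ((y : O) : K) := by
      rw [← map_mul, ← hcoe]; exact h.symm
    rw [hπ] at hval
    have hy := y.2
    rw [Valuation.mem_valuationSubring_iff] at hy
    have hcon : (1 : ℤₘ₀) ≤ ((Multiplicative.ofAdd (-1 : ℤ) : Multiplicative ℤ) : ℤₘ₀) := by
      calc (1:ℤₘ₀) = _ * Valued.v ((y : O) : K) := hval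
      _ ≤ _ * 1 := mul_le_mul_right hy _
      _ = _ := mul_one _
    have : ((Multiplicative.ofAdd (0:ℤ)) : Multiplicative ℤ) ≤ Multiplicative.ofAdd (-1:ℤ) :=
      WithZero.coe_le_coe.mp (by exact_mod_cast hcon)
    have := Multiplicative.ofAdd_le.mp this
    omega

lemma mem_maxIdeal_pow (x : O) (n : ℕ) :
    x ∈ (IsLocalRing.maximalIdeal O) ^ n ↔
      Valued.v (x : K) ≤ ((Multiplicative.ofAdd (-(n:ℤ)) : Multiplicative ℤ) : ℤₘ₀) := by
  rw [maxIdeal_eq hπ, Ideal.span_singleton_pow, Ideal.mem_span_singleton]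
  constructor
  · rintro ⟨y, rfl⟩
    have : ((piO hπ ^ n * y : O) : K) = π ^ n * (y : K) := by push_cast [coe_piO]; ring
    rw [this, map_mul, map_pow, hπ]
    calc (↑(ofAdd (-1:ℤ)))^n * Valued.v (y:K) ≤ (↑(ofAdd (-1:ℤ)))^n * 1 :=
          mul_le_mul_right y.2 _
      _ = ((Multiplicative.ofAdd (-(n:ℤ)) : Multiplicative ℤ) : ℤₘ₀) := by
          rw [mul_one, ← WithZero.coe_pow]
          norm_cast
          rw [← ofAdd_nsmul]
          norm_num
  · intro hle
    have hpn : Valued.v (π ^ n) = ((Multiplicative.ofAdd (-(n:ℤ)) : Multiplicative ℤ) : ℤₘ₀) := by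
      rw [map_pow, hπ, ← WithZero.coe_pow]
      norm_cast
      rw [← ofAdd_nsmul]
      norm_num
    refine ⟨⟨(x : K) / π ^ n, ?_⟩, ?_⟩
    · rw [Valuation.mem_valuationSubring_iff, map_div₀, hpn]
      rw [div_le_one₀ (zero_lt_iff.mpr (by exact WithZero.coe_ne_zero))]
      exact hle
    · ext
      push_cast [coe_piO]
      field_simp [pi_ne_zero hπ]

lemma val_sq_sub {a : K} (ha : Valued.v a = 1)
    (hns : ¬ IsSquare (IsLocalRing.residue O (⟨a, le_of_eq ha⟩ : O)))
    {w x : K} (h : ¬(w = 0 ∧ x = 0)) :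
    ∃ k : ℤ, Valued.v (w ^ 2 - a * x ^ 2) =
      ((Multiplicative.ofAdd (2 * k) : Multiplicative ℤ) : ℤₘ₀) := by
  have ha0 : a ≠ 0 := by intro h0; rw [h0] at ha; simp at ha
  by_cases hx : x = 0
  · have hw : w ≠ 0 := fun h0 => h ⟨h0, hx⟩
    obtain ⟨k, hk⟩ := exists_int_val hw
    refine ⟨k, ?_⟩
    rw [show w ^ 2 - a * x ^ 2 = w ^ 2 by rw [hx]; ring, map_pow, hk, ← WithZero.coe_pow]
    norm_cast
  · by_cases hw : w = 0
    · obtain ⟨k, hk⟩ := exists_int_val hx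
      refine ⟨k, ?_⟩
      rw [show w ^ 2 - a * x ^ 2 = -(a * x ^ 2) by rw [hw]; ring, Valuation.map_neg, map_mul,
        map_pow, ha, hk, one_mul, ← WithZero.coe_pow]
      norm_cast
    · obtain ⟨kw, hkw⟩ := exists_int_val hw
      obtain ⟨kx, hkx⟩ := exists_int_val hx
      have hsqw : Valued.v (w ^ 2) = ((Multiplicative.ofAdd (2 * kw) : Multiplicative ℤ) : ℤₘ₀) := by
        rw [map_pow, hkw, ← WithZero.coe_pow]
        norm_cast
      have hsqx : Valued.v (a * x ^ 2) =
          ((Multiplicative.ofAdd (2 * kx) : Multiplicative ℤ) : ℤₘ₀) := by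
        rw [map_mul, ha, one_mul, map_pow, hkx, ← WithZero.coe_pow]
        norm_cast
      by_cases hval : kw = kx
      · -- equal valuations: use residues
        set u : K := w / x with hu
        have hu1 : Valued.v u = 1 := by
          rw [hu, map_div₀, hkw, hkx, hval]
          exact div_self (by exact WithZero.coe_ne_zero)
        set uO : O := ⟨u, le_of_eq hu1⟩ with huO
        set aO : O := ⟨a, le_of_eq ha⟩ with haO
        set zO : O := uO * uO - aO with hzO
        have hres : IsLocalRing.residue O zO ≠ 0 := by
          intro h0
          apply hns
          rw [hzO, map_sub, map_mul, sub_eq_zero] at h0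
          exact ⟨IsLocalRing.residue O uO, h0.symm⟩
        have hzval : Valued.v ((zO : O) : K) = 1 := (residue_ne_zero_iff zO).mp hres
        have hzcoe : ((zO : O) : K) = u * u - a := by push_cast [hzO]; ring
        have hfactor : w ^ 2 - a * x ^ 2 = x ^ 2 * (u * u - a) := by
          rw [hu]
          field_simp
        refine ⟨kx, ?_⟩
        rw [hfactor, map_mul, ← hzcoe, hzval, mul_one, map_pow, hkx, ← WithZero.coe_pow]
        norm_cast
      · -- distinct valuations
        have hne : Valued.v (w ^ 2) ≠ Valued.v (a * x ^ 2) := by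
          rw [hsqw, hsqx]
          intro hcon
          have h2 : (2 * kw) = (2 * kx) := by
            simpa using congrArg Multiplicative.toAdd (WithZero.coe_inj.mp hcon)
          omega
        have hmax : Valued.v (w ^ 2 - a * x ^ 2) =
            max (Valued.v (w ^ 2)) (Valued.v (a * x ^ 2)) := by
          rw [sub_eq_add_neg]
          rw [← Valuation.map_neg Valued.v (a * x ^ 2)] at hne
          rw [Valuation.map_add_of_distinct_val Valued.v hne, Valuation.map_neg]
        rcases max_cases (Valued.v (w ^ 2)) (Valued.v (a * x ^ 2)) with ⟨hm, -⟩ | ⟨hm, -⟩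
        · exact ⟨kw, by rw [hmax, hm, hsqw]⟩
        · exact ⟨kx, by rw [hmax, hm, hsqx]⟩


section Complete
variable [CompleteSpace K]

lemma smod_iff (x y : O) (n : ℕ) :
    x ≡ y [SMOD ((IsLocalRing.maximalIdeal O) ^ n • ⊤ : Ideal O)] ↔
      Valued.v ((x : K) - (y : K)) ≤ ((Multiplicative.ofAdd (-(n:ℤ)) : Multiplicative ℤ) : ℤₘ₀) := by
  rw [← Ideal.one_eq_top, smul_eq_mul, mul_one, SModEq.sub_mem, mem_maxIdeal_pow hπ]
  push_cast
  rfl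

lemma adicComplete : IsAdicComplete (IsLocalRing.maximalIdeal O) O := by
  refine { toIsHausdorff := ⟨?_⟩, toIsPrecomplete := ⟨?_⟩ }
  · intro x hx
    have hx' : ∀ n : ℕ, x ≡ 0 [SMOD ((IsLocalRing.maximalIdeal O) ^ n • ⊤ : Ideal O)] := hx
    by_contra hx0
    have hx0' : (x : K) ≠ 0 := fun h => hx0 (Subtype.ext h)
    obtain ⟨k, hk⟩ := exists_int_val hx0'
    have hle : ∀ n : ℕ, k ≤ -(n:ℤ) := by
      intro n
      have := (smod_iff hπ x 0 n).mp (hx' n)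
      simp only [ZeroMemClass.coe_zero, sub_zero] at this
      rw [hk] at this
      have h2 := WithZero.coe_le_coe.mp (by exact_mod_cast this)
      exact Multiplicative.ofAdd_le.mp h2
    have := hle (k.natAbs + 1)
    omega
  · intro c hc
    set u : ℕ → K := fun n => ((c n : O) : K) with hu
    have key : ∀ N : ℕ, ∀ m n, N ≤ m → N ≤ n →
        Valued.v (u n - u m) ≤ ((Multiplicative.ofAdd (-(N:ℤ)) : Multiplicative ℤ) : ℤₘ₀) := by
      intro N m n hm hn
      rcases le_total m n with h | h
      · have := (smod_iff hπ (c m) (c n) m).mp (hc h)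
        rw [← Valuation.map_sub_swap] at this
        refine le_trans this ?_
        exact WithZero.coe_le_coe.mpr (Multiplicative.ofAdd_le.mpr (by omega))
      · have := (smod_iff hπ (c n) (c m) n).mp (hc h)
        refine le_trans this ?_
        exact WithZero.coe_le_coe.mpr (Multiplicative.ofAdd_le.mpr (by omega))
    have hcauchy : CauchySeq u := by
      rw [(Valued.hasBasis_uniformity K ℤₘ₀).cauchySeq_iff]
      intro γ0 _
      set γ : ℤₘ₀ˣ := Units.map (MonoidWithZeroHom.ValueGroup₀.embedding (f := (MonoidWithZeroHom.ofClass (Valued.v (R := K))))) γ0 with hγ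
      obtain ⟨g, hg⟩ := WithZero.ne_zero_iff_exists.mp γ.ne_zero
      set N : ℕ := (Multiplicative.toAdd g).natAbs + 1 with hN
      refine ⟨N, fun m hm n hn => ?_⟩
      have h1 := key N m n hm hn
      have h2 : ((Multiplicative.ofAdd (-(N:ℤ)) : Multiplicative ℤ) : ℤₘ₀) < γ := by
        rw [← hg]
        refine WithZero.coe_lt_coe.mpr ?_
        rw [show g = Multiplicative.ofAdd (Multiplicative.toAdd g) from (ofAdd_toAdd g).symm]
        exact Multiplicative.ofAdd_lt.mpr (by omega)
      exact (Valuation.restrict_lt_iff_lt_embedding Valued.v).mpr (lt_of_le_of_lt h1 h2)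
    obtain ⟨L, hL⟩ := cauchySeq_tendsto_of_complete hcauchy
    have happrox : ∀ γ : ℤₘ₀ˣ, ∃ m₀ : ℕ, ∀ m ≥ m₀, Valued.v (u m - L) < (γ : ℤₘ₀) := by
      intro γ
      have hmem : {y : K | Valued.v (y - L) < (γ : ℤₘ₀)} ∈ nhds L := by
        obtain ⟨g, hg⟩ := WithZero.ne_zero_iff_exists.mp γ.ne_zero
        have hy : Valued.v (π ^ (-(Multiplicative.toAdd g))) = (γ : ℤₘ₀) := by
          rw [val_zpow hπ, ← hg]; congr 1; simp
        have hy0 : (0 : _) < Valued.v.restrict (π ^ (-(Multiplicative.toAdd g))) := by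
          rw [Valuation.restrict_pos_iff, hy]; exact zero_lt_iff.mpr γ.ne_zero
        rw [Valued.mem_nhds]
        refine ⟨Units.mk0 _ hy0.ne', fun y hy' => ?_⟩
        have h3 : Valued.v.restrict (y - L) < Valued.v.restrict (π ^ (-(Multiplicative.toAdd g))) := hy'
        rw [Valuation.restrict_lt_iff, hy] at h3
        exact h3
      have hev := hL.eventually (Filter.eventually_of_mem hmem (fun y hy => hy))
      exact Filter.eventually_atTop.mp hev
    have hLmem : L ∈ O := by
      obtain ⟨m₀, hm₀⟩ := happrox 1
      have h1 : Valued.v (u m₀ - L) < (1:ℤₘ₀) := by simpa using hm₀ m₀ le_rfl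
      rw [Valuation.mem_valuationSubring_iff]
      have heq : L = u m₀ - (u m₀ - L) := by ring
      calc Valued.v L = Valued.v (u m₀ - (u m₀ - L)) := by rw [← heq]
        _ ≤ max (Valued.v (u m₀)) (Valued.v (u m₀ - L)) := Valuation.map_sub _ _ _
        _ ≤ 1 := max_le (c m₀).2 h1.le
    refine ⟨⟨L, hLmem⟩, fun n => ?_⟩
    rw [smod_iff hπ]
    set γn : ℤₘ₀ˣ := Units.mk0 ((Multiplicative.ofAdd (-(n:ℤ)) : Multiplicative ℤ) : ℤₘ₀)
      WithZero.coe_ne_zero with hγn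
    obtain ⟨m₀, hm₀⟩ := happrox γn
    set m : ℕ := max n m₀ with hm
    have h1 : Valued.v (u n - u m) ≤ ((Multiplicative.ofAdd (-(n:ℤ)) : Multiplicative ℤ) : ℤₘ₀) :=
      key n m n (le_max_left _ _) le_rfl
    have h2 : Valued.v (u m - L) < ((Multiplicative.ofAdd (-(n:ℤ)) : Multiplicative ℤ) : ℤₘ₀) :=
      hm₀ m (le_max_right _ _)
    have heq : u n - L = (u n - u m) + (u m - L) := by ring
    calc Valued.v ((c n : K) - L) = Valued.v ((u n - u m) + (u m - L)) := by rw [← heq]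
      _ ≤ max (Valued.v (u n - u m)) (Valued.v (u m - L)) := Valuation.map_add _ _ _
      _ ≤ _ := max_le h1 h2.le

lemma exists_sqrt (htwo : (2 : IsLocalRing.ResidueField O) ≠ 0) (s : O)
    (r : IsLocalRing.ResidueField O) (hr : r ≠ 0)
    (hsr : IsLocalRing.residue O s = r ^ 2) : ∃ t : O, t ^ 2 = s := by
  haveI := adicComplete hπ
  obtain ⟨a₀, ha₀⟩ := IsLocalRing.residue_surjective (R := O) r
  have H := HenselianRing.is_henselian (R := O) (I := IsLocalRing.maximalIdeal O)
    (X ^ 2 - Polynomial.C s) (monic_X_pow_sub_C s (by norm_num)) a₀ ?_ ?_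
  · obtain ⟨t, ht, -⟩ := H
    refine ⟨t, ?_⟩
    have h2 := ht
    simp only [Polynomial.IsRoot, eval_sub, eval_pow, eval_X, eval_C, sub_eq_zero] at h2
    exact h2
  · rw [← Ideal.Quotient.eq_zero_iff_mem]
    have h3 : eval a₀ (X ^ 2 - Polynomial.C s) = a₀ ^ 2 - s := by simp
    rw [h3]
    have h4 : IsLocalRing.residue O (a₀ ^ 2 - s) = 0 := by
      rw [map_sub, map_pow, ha₀, hsr, sub_self]
    exact h4
  · have hd : eval a₀ (derivative (X ^ 2 - Polynomial.C s)) = 2 * a₀ := by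
      simp [derivative_X_pow]
      norm_num
    rw [hd]
    have h5 : IsLocalRing.residue O (2 * a₀) ≠ 0 := by
      rw [map_mul, map_ofNat, ha₀]
      exact mul_ne_zero htwo hr
    exact isUnit_iff_ne_zero.mpr h5

end Complete

end HilbAux

/-- Over a complete discretely valued field with finite residue field of odd order, for a
valuation unit `a`: the Hilbert symbol `(a,b) = -1` (i.e. `H(a,b)` is a division algebra)
iff `v(b)` is odd and the residue of `a` is a nonsquare. -/
theorem stmt2 (K : Type) [Field K] [Valued K (WithZero (Multiplicative ℤ))] [CompleteSpace K]
    (hdisc : ∃ π : K, Valued.v π = ((Multiplicative.ofAdd (-1 : ℤ) : Multiplicative ℤ) : (WithZero (Multiplicative ℤ))))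
    [Finite (IsLocalRing.ResidueField (Valued.v.valuationSubring : ValuationSubring K))]
    (hodd : Odd (Nat.card (IsLocalRing.ResidueField
      (Valued.v.valuationSubring : ValuationSubring K))))
    (a b : K) (ha : Valued.v a = 1) (hb : b ≠ 0) :
    (∀ x : ℍ[K, a, b], x ≠ 0 → IsUnit x) ↔
      ((∃ n : ℤ, Valued.v b = ((Multiplicative.ofAdd n : Multiplicative ℤ) : (WithZero (Multiplicative ℤ))) ∧ Odd n) ∧
       ¬ IsSquare (IsLocalRing.residue (Valued.v.valuationSubring : ValuationSubring K)
          ⟨a, le_of_eq ha⟩)) := by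
  classical
  obtain ⟨π, hπ⟩ := hdisc
  have hπ0 : π ≠ 0 := HilbAux.pi_ne_zero hπ
  set O := (Valued.v.valuationSubring : ValuationSubring K) with hO
  have htwo : (2 : IsLocalRing.ResidueField O) ≠ 0 := HilbAux.two_ne_zero_of_odd_card hodd
  set aO : O := ⟨a, le_of_eq ha⟩ with haO
  have haO_res : IsLocalRing.residue O aO ≠ 0 := (HilbAux.residue_ne_zero_iff aO).mpr ha
  constructor
  · intro hdiv
    have hns : ¬ IsSquare (IsLocalRing.residue O aO) := by
      rintro ⟨r, hr⟩
      have hrne : r ≠ 0 := by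
        intro h0; rw [h0, mul_zero] at hr; exact haO_res hr
      obtain ⟨t, ht⟩ := HilbAux.exists_sqrt hπ htwo aO r hrne (by rw [hr]; ring)
      have htK : ((t : K)) ^ 2 = a := by
        have h2 := congrArg (fun z : O => (z : K)) ht
        push_cast at h2
        exact h2
      set q : ℍ[K, a, b] := ⟨(t : K), 1, 0, 0⟩ with hq
      have hq0 : q ≠ 0 := by
        intro h0
        have := congrArg QuaternionAlgebra.imI h0
        simp [hq] at this
      refine HilbAux.not_isUnit_of_qnorm_eq_zero hq0 ?_ (hdiv q hq0)
      simp [HilbAux.qnorm, hq, htK]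
    obtain ⟨n, hn⟩ := HilbAux.exists_int_val hb
    refine ⟨⟨n, hn, ?_⟩, hns⟩
    by_contra hnodd
    rw [Int.not_odd_iff_even] at hnodd
    obtain ⟨m, hm⟩ := hnodd
    -- build a zero divisor
    set u : K := b * π ^ n with hu
    have hu1 : Valued.v u = 1 := by
      rw [hu, map_mul, hn, HilbAux.val_zpow hπ n, ← WithZero.coe_mul]
      have h4 : Multiplicative.ofAdd n * Multiplicative.ofAdd (n * (-1)) =
          (1 : Multiplicative ℤ) := by
        rw [← ofAdd_add]
        norm_num
      rw [h4]
      rfl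
    set uO : O := ⟨u, le_of_eq hu1⟩ with huO
    have huO_res : IsLocalRing.residue O uO ≠ 0 := (HilbAux.residue_ne_zero_iff uO).mpr hu1
    obtain ⟨wbar, xbar, hwx⟩ := HilbAux.finite_field_rep hodd (IsLocalRing.residue O aO)
      (IsLocalRing.residue O uO) haO_res huO_res
    have hπsq : b * ((π ^ (m : ℤ) : K)) ^ 2 = u := by
      have hsq : ((π ^ (m : ℤ) : K)) ^ 2 = π ^ n := by
        rw [← zpow_natCast (π ^ (m : ℤ)) 2, ← zpow_mul]
        congr 1
        omega
      rw [hsq, hu]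
    have hcontra : ∀ w t : O, (w : K) ^ 2 - a * (t : K) ^ 2 = u → False := by
      intro w t hwt
      set q : ℍ[K, a, b] := ⟨(w : K), (t : K), π ^ (m : ℤ), 0⟩ with hq
      have hq0 : q ≠ 0 := by
        intro h0
        have h2 := congrArg QuaternionAlgebra.imJ h0
        simp only [hq, QuaternionAlgebra.imJ_zero] at h2
        exact zpow_ne_zero m hπ0 h2
      refine HilbAux.not_isUnit_of_qnorm_eq_zero hq0 ?_ (hdiv q hq0)
      show (q.re) ^ 2 - a * q.imI ^ 2 - b * q.imJ ^ 2 + a * b * q.imK ^ 2 = 0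
      have hre : q.re = (w : K) := rfl
      have hImI : q.imI = (t : K) := rfl
      have hImJ : q.imJ = π ^ (m : ℤ) := rfl
      have hImK : q.imK = 0 := rfl
      rw [hre, hImI, hImJ, hImK]
      linear_combination hwt - hπsq
    by_cases hxbar : xbar = 0
    · have hwbar : wbar ≠ 0 := by
        intro h0
        rw [h0, hxbar] at hwx
        apply huO_res
        rw [← hwx]
        ring
      obtain ⟨t, ht⟩ := HilbAux.exists_sqrt hπ htwo uO wbar hwbar
        (by rw [← hwx, hxbar]; ring)
      apply hcontra t 0
      have h2 := congrArg (fun z : O => (z : K)) ht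
      push_cast at h2
      rw [h2]
      push_cast
      ring
    · obtain ⟨w₀, hw₀⟩ := IsLocalRing.residue_surjective (R := O) wbar
      obtain ⟨aU, haU⟩ := (HilbAux.isUnit_iff aO).mpr ha
      set aInv : O := ((aU⁻¹ : Oˣ) : O) with haInv_def
      have haInv : aO * aInv = 1 := by
        rw [← haU]
        exact_mod_cast aU.mul_inv
      set s : O := (w₀ ^ 2 - uO) * aInv with hs
      have hres_s : IsLocalRing.residue O s = xbar ^ 2 := by
        have h1 : IsLocalRing.residue O aO * IsLocalRing.residue O aInv = 1 := by
          rw [← map_mul, haInv, map_one]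
        rw [hs, map_mul, map_sub, map_pow, hw₀]
        have h2 : wbar ^ 2 - IsLocalRing.residue O uO =
            IsLocalRing.residue O aO * xbar ^ 2 := by linear_combination hwx
        rw [h2]
        linear_combination xbar ^ 2 * h1
      obtain ⟨t, ht⟩ := HilbAux.exists_sqrt hπ htwo s xbar hxbar hres_s
      have hOrel : aO * t ^ 2 = w₀ ^ 2 - uO := by
        rw [hs] at ht
        linear_combination aO * ht + (w₀ ^ 2 - uO) * haInv
      have hK : a * (t : K) ^ 2 = (w₀ : K) ^ 2 - u := by
        have h2 := congrArg (fun z : O => (z : K)) hOrel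
        push_cast at h2
        exact h2
      exact hcontra w₀ t (by linear_combination -hK)
  · rintro ⟨⟨n, hn, hnodd⟩, hns⟩ x hx
    refine HilbAux.isUnit_of_qnorm_ne_zero (c₁ := a) (c₂ := b) ?_
    intro h0
    set A : K := x.re ^ 2 - a * x.imI ^ 2 with hA
    set B : K := x.imJ ^ 2 - a * x.imK ^ 2 with hB
    have hAB : A = b * B := by
      rw [hA, hB]
      have : HilbAux.qnorm a b x = 0 := h0
      rw [HilbAux.qnorm] at this
      linear_combination this
    by_cases h1 : x.re = 0 ∧ x.imI = 0
    · by_cases h2 : x.imJ = 0 ∧ x.imK = 0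
      · exact hx (by ext <;> simp [h1.1, h1.2, h2.1, h2.2])
      · obtain ⟨k, hk⟩ := HilbAux.val_sq_sub hπ ha hns h2
        have hA0 : A = 0 := by rw [hA, h1.1, h1.2]; ring
        have hB0 : B = 0 := by
          rcases mul_eq_zero.mp (hA0 ▸ hAB.symm) with h | h
          · exact absurd h hb
          · exact h
        rw [← hB, hB0, map_zero] at hk
        exact WithZero.zero_ne_coe hk
    · by_cases h2 : x.imJ = 0 ∧ x.imK = 0
      · obtain ⟨k, hk⟩ := HilbAux.val_sq_sub hπ ha hns h1
        have hB0 : B = 0 := by rw [hB, h2.1, h2.2]; ring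
        have hA0 : A = 0 := by rw [hAB, hB0, mul_zero]
        rw [← hA, hA0, map_zero] at hk
        exact WithZero.zero_ne_coe hk
      · obtain ⟨k, hkA⟩ := HilbAux.val_sq_sub hπ ha hns h1
        obtain ⟨k', hkB⟩ := HilbAux.val_sq_sub hπ ha hns h2
        have hveq : Valued.v A = Valued.v (b * B) := congrArg _ hAB
        rw [← hA] at hkA
        rw [← hB] at hkB
        rw [map_mul, hn, hkB, ← WithZero.coe_mul] at hveq
        rw [hkA] at hveq
        have h4 : Multiplicative.ofAdd (2 * k) =
            Multiplicative.ofAdd n * Multiplicative.ofAdd (2 * k') := WithZero.coe_inj.mp hveq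
        rw [← ofAdd_add] at h4
        have h3 : k * 2 = n + k' * 2 := by
          simpa using congrArg Multiplicative.toAdd h4
        obtain ⟨j, hj⟩ := hnodd
        omega
end
end

section
/- Let q be an odd prime power, and let f(t), d(t) ∈ F_q[t] be monic irreducible polynomials of opposite parity in degree. Then the law of quadratic reciprocity gives (d/f)·(f/d) = (-1)^{((q-1)/2)·deg(f)·deg(d)} = 1, i.e. d(t) is a square mod f(t) if and only if f(t) is a square mod d(t). -/
open Quaternion HahnSeries IsDedekindDomain Polynomial Multiplicative
noncomputable section

open Classical in
/-- The Legendre symbol `(g/f)` for polynomials over `F_q`: `1` if `g` is a square mod `f`,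
and `-1` otherwise. -/
def legSym (F : Type) [Field F] (f g : Polynomial F) : ℤ :=
  if IsSquare (Ideal.Quotient.mk (Ideal.span {f}) g) then 1 else -1

private lemma geom_aux (q : ℕ) (hq : 1 ≤ q) (m : ℕ) :
    (q - 1) * ∑ i ∈ Finset.range m, q ^ i = q ^ m - 1 := by
  induction m with
  | zero => simp
  | succ m ih =>
    rw [Finset.sum_range_succ, Nat.mul_add, ih]
    have h1 : 1 ≤ q ^ m := Nat.one_le_pow _ _ hq
    have h2 : q ^ m ≤ q ^ (m + 1) := Nat.pow_le_pow_right hq (Nat.le_succ m)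
    have h3 : (q - 1) * q ^ m = q ^ (m + 1) - q ^ m := by
      rw [Nat.sub_mul, one_mul, pow_succ, mul_comm q (q ^ m)]
    omega

private lemma swap_prod {Ω : Type} [Field Ω] (A B : Finset Ω) :
    ∏ b ∈ B, ∏ a ∈ A, (b - a) = (-1 : Ω) ^ (A.card * B.card) * ∏ a ∈ A, ∏ b ∈ B, (a - b) := by
  have : ∀ b : Ω, ∏ a ∈ A, (b - a) = (-1 : Ω) ^ A.card * ∏ a ∈ A, (a - b) := by
    intro b
    rw [← Finset.prod_const, ← Finset.prod_mul_distrib]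
    exact Finset.prod_congr rfl fun a _ => by ring
  calc ∏ b ∈ B, ∏ a ∈ A, (b - a)
      = ∏ b ∈ B, ((-1 : Ω) ^ A.card * ∏ a ∈ A, (a - b)) := Finset.prod_congr rfl fun b _ => this b
    _ = ((-1 : Ω) ^ A.card) ^ B.card * ∏ b ∈ B, ∏ a ∈ A, (a - b) := by
        rw [Finset.prod_mul_distrib, Finset.prod_const]
    _ = (-1 : Ω) ^ (A.card * B.card) * ∏ a ∈ A, ∏ b ∈ B, (a - b) := by
        rw [← pow_mul, Finset.prod_comm]

/-- The roots of a monic irreducible `f` over a finite field `F` in the algebraic closure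
form a Frobenius orbit, and the product of `r` evaluated at all roots is
`r(a₀) ^ (∑ q^i)`. -/
private lemma prod_aroots {F : Type} [Field F] [Fintype F] (f : F[X]) (hfm : f.Monic)
    (hfi : Irreducible f) (ψ : AdjoinRoot f →ₐ[F] AlgebraicClosure F) (r : F[X]) :
    ((f.aroots (AlgebraicClosure F)).map (fun a => aeval a r)).prod
      = (aeval (ψ (AdjoinRoot.root f)) r) ^
          (∑ i ∈ Finset.range f.natDegree, (Fintype.card F) ^ i) := by
  classical
  set Ω := AlgebraicClosure F with hΩ
  set q := Fintype.card F with hq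
  set m := f.natDegree with hm
  haveI := Fact.mk hfi
  have hq1 : 1 < q := Fintype.one_lt_card
  set p := ringChar F with hp_def
  haveI hcp : CharP F p := ringChar.charP F
  have hp : p.Prime := CharP.char_is_prime F p
  obtain ⟨s, hps, hqs⟩ := FiniteField.card F p
  haveI : CharP Ω p := charP_of_injective_algebraMap (algebraMap F Ω).injective p
  haveI : ExpChar Ω p := ExpChar.prime hp
  have hfrob : ∀ (k : ℕ) (c : F), (iterateFrobenius Ω p (s * k)) (algebraMap F Ω c)
      = algebraMap F Ω c := by
    intro k c
    rw [iterateFrobenius_def, ← map_pow]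
    congr 1
    have h1 : c ^ p ^ ((s : ℕ) * k) = c ^ q ^ k := by
      rw [hq, hqs, ← pow_mul]
    rw [h1]
    exact FiniteField.pow_card_pow k c
  let φ : ℕ → (Ω →ₐ[F] Ω) := fun k =>
    { toRingHom := iterateFrobenius Ω p ((s : ℕ) * k), commutes' := hfrob k }
  have φ_apply : ∀ (k : ℕ) (x : Ω), φ k x = x ^ q ^ k := by
    intro k x
    show iterateFrobenius Ω p ((s : ℕ) * k) x = x ^ q ^ k
    rw [iterateFrobenius_def, hq, hqs, ← pow_mul]
  set a₀ := ψ (AdjoinRoot.root f) with ha₀_def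
  have ha₀ : aeval a₀ f = 0 := by
    rw [ha₀_def, aeval_algHom_apply, AdjoinRoot.aeval_eq, AdjoinRoot.mk_self, map_zero]
  -- finiteness of AdjoinRoot f
  haveI : Module.Finite F (AdjoinRoot f) :=
    Module.Finite.of_basis (AdjoinRoot.powerBasis hfm.ne_zero).basis
  haveI : Finite (AdjoinRoot f) := Module.finite_of_finite F
  haveI : Fintype (AdjoinRoot f) := Fintype.ofFinite _
  have hKcard : Fintype.card (AdjoinRoot f) = q ^ m := by
    rw [Module.card_fintype (AdjoinRoot.powerBasis hfm.ne_zero).basis, Fintype.card_fin,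
      AdjoinRoot.powerBasis_dim]
  have hroot_pow : a₀ ^ q ^ m = a₀ := by
    rw [ha₀_def, ← map_pow, ← hKcard, FiniteField.pow_card]
  have hψinj : Function.Injective ψ := ψ.toRingHom.injective
  -- each Frobenius power of a₀ is a root
  have hmem : ∀ i : ℕ, a₀ ^ q ^ i ∈ (f.map (algebraMap F Ω)).roots := by
    intro i
    rw [mem_roots']
    refine ⟨(hfm.map _).ne_zero, ?_⟩
    show eval (a₀ ^ q ^ i) (f.map (algebraMap F Ω)) = 0
    rw [eval_map, ← aeval_def, ← φ_apply i a₀, aeval_algHom_apply, ha₀, map_zero]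
  -- injectivity of i ↦ a₀ ^ q ^ i on range m
  have key : ∀ k : ℕ, 0 < k → k < m → a₀ ^ q ^ k = a₀ → False := by
    intro k hk0 hkm hk
    -- φ k fixes ψ pointwise
    have hcomp : (φ k).comp ψ = ψ := by
      apply AdjoinRoot.algHom_ext
      show φ k a₀ = a₀
      rw [φ_apply, hk]
    have hfix : ∀ x : AdjoinRoot f, (ψ x) ^ q ^ k = ψ x := by
      intro x
      have := AlgHom.congr_fun hcomp x
      rwa [AlgHom.comp_apply, φ_apply] at this
    -- too many roots of X^(q^k) - X
    set g : Polynomial Ω := X ^ (q ^ k) - X with hg_def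
    have hqk2 : 2 ≤ q ^ k := le_trans hq1 (Nat.le_self_pow (by omega) q)
    have hg0 : g ≠ 0 := by
      intro h
      have h1 : Polynomial.coeff g (q ^ k) = 0 := by rw [h]; simp
      rw [hg_def, Polynomial.coeff_sub, coeff_X_pow, if_pos rfl, coeff_X, if_neg (by omega),
        sub_zero] at h1
      exact one_ne_zero h1
    have hgdeg : g.natDegree ≤ q ^ k := by
      refine le_trans (natDegree_sub_le _ _) ?_
      simp only [natDegree_X_pow, natDegree_X]
      omega
    set T : Finset Ω := Finset.univ.image ψ with hT_def
    have hTcard : T.card = q ^ m := by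
      rw [hT_def, Finset.card_image_of_injective _ hψinj, Finset.card_univ, hKcard]
    have hTsub : T.val ≤ g.roots := by
      rw [Multiset.le_iff_subset T.nodup]
      intro t ht
      have ht' : t ∈ T := ht
      obtain ⟨x, _, rfl⟩ := Finset.mem_image.mp ht'
      rw [mem_roots']
      refine ⟨hg0, ?_⟩
      show eval (ψ x) g = 0
      simp only [hg_def, eval_sub, eval_pow, eval_X]
      rw [hfix x, sub_self]
    have hle : q ^ m ≤ q ^ k := by
      calc q ^ m = T.card := hTcard.symm
        _ = Multiset.card T.val := rfl
        _ ≤ Multiset.card g.roots := Multiset.card_le_card hTsub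
        _ ≤ g.natDegree := card_roots' g
        _ ≤ q ^ k := hgdeg
    have hlt : q ^ k < q ^ m := Nat.pow_lt_pow_right hq1 hkm
    omega
  have hinj : ∀ i ∈ Multiset.range m, ∀ j ∈ Multiset.range m,
      a₀ ^ q ^ i = a₀ ^ q ^ j → i = j := by
    have key2 : ∀ i j, i < j → j < m → a₀ ^ q ^ i = a₀ ^ q ^ j → False := by
      intro i j hij hjm heq
      have hk : a₀ ^ q ^ (i + (m - j)) = a₀ := by
        have h2 := congrArg (fun x : Ω => x ^ q ^ (m - j)) heq
        simp only [← pow_mul, ← _root_.pow_add] at h2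
        have hjmj : j + (m - j) = m := by omega
        rw [h2, hjmj, hroot_pow]
      exact key (i + (m - j)) (by omega) (by omega) hk
    intro i hi j hj heq
    rw [Multiset.mem_range] at hi hj
    rcases lt_trichotomy i j with h | h | h
    · exact absurd heq (fun heq => (key2 i j h hj heq).elim)
    · exact h
    · exact absurd heq.symm (fun heq => (key2 j i h hi heq).elim)
  -- the multiset of roots equals the Frobenius orbit
  have hsep : (f.map (algebraMap F Ω)).Separable :=
    (PerfectField.separable_of_irreducible hfi).map
  have hnodup : (f.map (algebraMap F Ω)).roots.Nodup := nodup_roots hsep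
  have hcardroots : Multiset.card (f.map (algebraMap F Ω)).roots = m := by
    have hsp := splits_iff_card_roots.mp (IsAlgClosed.splits (f.map (algebraMap F Ω)))
    rwa [natDegree_map] at hsp
  set S : Multiset Ω := (Multiset.range m).map (fun i => a₀ ^ q ^ i) with hS_def
  have hSnodup : S.Nodup := Multiset.Nodup.map_on hinj (Multiset.nodup_range m)
  have hSle : S ≤ (f.map (algebraMap F Ω)).roots := by
    rw [Multiset.le_iff_subset hSnodup]
    intro x hx
    obtain ⟨i, _, rfl⟩ := Multiset.mem_map.mp hx
    exact hmem i
  have hSeq : (f.map (algebraMap F Ω)).roots = S := by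
    refine (Multiset.eq_of_le_of_card_le hSle ?_).symm
    rw [hcardroots, hS_def, Multiset.card_map, Multiset.card_range]
  -- compute the product
  rw [aroots_def, hSeq, hS_def, Multiset.map_map]
  have : ∀ i : ℕ, aeval (a₀ ^ q ^ i) r = (aeval a₀ r) ^ q ^ i := by
    intro i
    rw [← φ_apply i a₀, aeval_algHom_apply, φ_apply]
  simp only [Function.comp, this]
  rw [← Finset.range_val, ← Finset.prod_eq_multiset_prod, Finset.prod_pow_eq_pow_sum]

/-- Quadratic reciprocity in `F_q[t]` for monic irreducibles of opposite degree parity: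
`(d/f)(f/d) = (-1)^(((q-1)/2)·deg f·deg d) = 1`, so `d` is a square mod `f` iff `f` is a
square mod `d`. -/
theorem stmt8 (F : Type) [Field F] [Fintype F] (hq : Odd (Fintype.card F))
    (f d : Polynomial F) (hfm : f.Monic) (hfi : Irreducible f)
    (hdm : d.Monic) (hdi : Irreducible d) (hne : f ≠ d)
    (hpar : Even f.natDegree ↔ Odd d.natDegree) :
    legSym F f d * legSym F d f =
        (-1 : ℤ) ^ (((Fintype.card F - 1) / 2) * f.natDegree * d.natDegree) ∧
    legSym F f d * legSym F d f = 1 ∧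
    (IsSquare (Ideal.Quotient.mk (Ideal.span {f}) d) ↔
      IsSquare (Ideal.Quotient.mk (Ideal.span {d}) f)) := by
  classical
  set Ω := AlgebraicClosure F with hΩ
  set q := Fintype.card F with hq_def
  have hq1 : 1 < q := Fintype.one_lt_card
  set m := f.natDegree with hm
  set n := d.natDegree with hn
  have hmn : Even (m * n) := by
    rcases Nat.even_or_odd m with h | h
    · exact h.mul_right n
    · have h1 : ¬ Odd n := fun ho => (Nat.not_even_iff_odd.mpr h) (hpar.mpr ho)
      exact (Nat.not_odd_iff_even.mp h1).mul_left m
  haveI := Fact.mk hfi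
  haveI := Fact.mk hdi
  -- mutual non-divisibility
  have hfd : ¬ f ∣ d := by
    intro h
    exact hne (eq_of_monic_of_associated hfm hdm (hfi.associated_of_dvd hdi h))
  have hdf : ¬ d ∣ f := by
    intro h
    exact hne (eq_of_monic_of_associated hfm hdm (hdi.associated_of_dvd hfi h).symm)
  -- finiteness
  haveI : Module.Finite F (AdjoinRoot f) :=
    Module.Finite.of_basis (AdjoinRoot.powerBasis hfm.ne_zero).basis
  haveI : Module.Finite F (AdjoinRoot d) :=
    Module.Finite.of_basis (AdjoinRoot.powerBasis hdm.ne_zero).basis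
  haveI : Finite (AdjoinRoot f) := Module.finite_of_finite F
  haveI : Finite (AdjoinRoot d) := Module.finite_of_finite F
  haveI : Fintype (AdjoinRoot f) := Fintype.ofFinite _
  haveI : Fintype (AdjoinRoot d) := Fintype.ofFinite _
  have hKcard : Fintype.card (AdjoinRoot f) = q ^ m := by
    rw [Module.card_fintype (AdjoinRoot.powerBasis hfm.ne_zero).basis, Fintype.card_fin,
      AdjoinRoot.powerBasis_dim]
  have hLcard : Fintype.card (AdjoinRoot d) = q ^ n := by
    rw [Module.card_fintype (AdjoinRoot.powerBasis hdm.ne_zero).basis, Fintype.card_fin,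
      AdjoinRoot.powerBasis_dim]
  -- embeddings into the algebraic closure
  let ψf : AdjoinRoot f →ₐ[F] Ω := IsAlgClosed.lift
  let ψd : AdjoinRoot d →ₐ[F] Ω := IsAlgClosed.lift
  set a₀ := ψf (AdjoinRoot.root f) with ha₀
  set b₀ := ψd (AdjoinRoot.root d) with hb₀
  -- square criterion
  have hcharK : ringChar (AdjoinRoot f) ≠ 2 := by
    intro h
    have h2 := FiniteField.even_card_of_char_two h
    rw [hKcard] at h2
    obtain ⟨t, ht⟩ : Odd (q ^ m) := hq.pow
    omega
  have hcharL : ringChar (AdjoinRoot d) ≠ 2 := by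
    intro h
    have h2 := FiniteField.even_card_of_char_two h
    rw [hLcard] at h2
    obtain ⟨t, ht⟩ : Odd (q ^ n) := hq.pow
    omega
  have hd0 : (AdjoinRoot.mk f) d ≠ 0 := fun h => hfd (AdjoinRoot.mk_eq_zero.mp h)
  have hf0 : (AdjoinRoot.mk d) f ≠ 0 := fun h => hdf (AdjoinRoot.mk_eq_zero.mp h)
  have hinjf : Function.Injective ψf := (ψf : AdjoinRoot f →+* Ω).injective
  have hinjd : Function.Injective ψd := (ψd : AdjoinRoot d →+* Ω).injective
  have hpowf : ∀ (x : AdjoinRoot f) (e : ℕ), x ^ e = 1 ↔ (ψf x) ^ e = 1 := fun x e => by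
    rw [← map_pow, ← map_one ψf]; exact hinjf.eq_iff.symm
  have hpowd : ∀ (x : AdjoinRoot d) (e : ℕ), x ^ e = 1 ↔ (ψd x) ^ e = 1 := fun x e => by
    rw [← map_pow, ← map_one ψd]; exact hinjd.eq_iff.symm
  have hsqf : IsSquare ((AdjoinRoot.mk f) d) ↔
      (aeval a₀ d) ^ (q ^ m / 2) = 1 := by
    rw [FiniteField.isSquare_iff hcharK hd0, hKcard, hpowf, ← AdjoinRoot.aeval_eq,
      ← aeval_algHom_apply]
  have hsqd : IsSquare ((AdjoinRoot.mk d) f) ↔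
      (aeval b₀ f) ^ (q ^ n / 2) = 1 := by
    rw [FiniteField.isSquare_iff hcharL hf0, hLcard, hpowd, ← AdjoinRoot.aeval_eq,
      ← aeval_algHom_apply]
  -- products over roots
  have hfsep : (f.map (algebraMap F Ω)).Separable :=
    (PerfectField.separable_of_irreducible hfi).map
  have hdsep : (d.map (algebraMap F Ω)).Separable :=
    (PerfectField.separable_of_irreducible hdi).map
  set Af : Finset Ω := ⟨f.aroots Ω, by rw [aroots_def]; exact nodup_roots hfsep⟩ with hAf
  set Ad : Finset Ω := ⟨d.aroots Ω, by rw [aroots_def]; exact nodup_roots hdsep⟩ with hAd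
  have hAfcard : Af.card = m := by
    show Multiset.card (f.aroots Ω) = m
    have hsp := splits_iff_card_roots.mp (IsAlgClosed.splits (f.map (algebraMap F Ω)))
    rw [aroots_def]
    rwa [natDegree_map] at hsp
  have hAdcard : Ad.card = n := by
    show Multiset.card (d.aroots Ω) = n
    have hsp := splits_iff_card_roots.mp (IsAlgClosed.splits (d.map (algebraMap F Ω)))
    rw [aroots_def]
    rwa [natDegree_map] at hsp
  -- evaluation as a product over roots of the other polynomial
  have heval : ∀ (g : F[X]), g.Monic → ∀ x : Ω,
      aeval x g = ((g.aroots Ω).map (fun b => x - b)).prod := by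
    intro g hgm x
    have hsplit : (g.map (algebraMap F Ω)) =
        ((g.map (algebraMap F Ω)).roots.map (fun a => Polynomial.X - Polynomial.C a)).prod :=
      (IsAlgClosed.splits (g.map (algebraMap F Ω))).eq_prod_roots_of_monic (hgm.map _)
    rw [aeval_def, ← eval_map, hsplit, ← aroots_def]
    rw [eval_multiset_prod, Multiset.map_map]
    congr 1
    apply Multiset.map_congr rfl
    intro b _
    simp
  have hPAf : ∀ g : F[X], ((f.aroots Ω).map (fun a => aeval a g)).prod
      = ∏ a ∈ Af, aeval a g := by
    intro g
    rw [Finset.prod_eq_multiset_prod]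
  have hPAd : ∀ g : F[X], ((d.aroots Ω).map (fun a => aeval a g)).prod
      = ∏ a ∈ Ad, aeval a g := by
    intro g
    rw [Finset.prod_eq_multiset_prod]
  -- the two resultant-style products
  have hPf : ∏ a ∈ Af, ∏ b ∈ Ad, (a - b)
      = (aeval a₀ d) ^ (∑ i ∈ Finset.range m, q ^ i) := by
    rw [← prod_aroots f hfm hfi ψf d, hPAf d]
    refine Finset.prod_congr rfl fun a _ => ?_
    rw [heval d hdm a]
    exact Finset.prod_eq_multiset_prod Ad _
  have hPd : ∏ b ∈ Ad, ∏ a ∈ Af, (b - a)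
      = (aeval b₀ f) ^ (∑ i ∈ Finset.range n, q ^ i) := by
    rw [← prod_aroots d hdm hdi ψd f, hPAd f]
    refine Finset.prod_congr rfl fun b _ => ?_
    rw [heval f hfm b]
    exact Finset.prod_eq_multiset_prod Af _
  -- swap
  have hswap : (aeval b₀ f) ^ (∑ i ∈ Finset.range n, q ^ i)
      = (-1 : Ω) ^ (m * n) * (aeval a₀ d) ^ (∑ i ∈ Finset.range m, q ^ i) := by
    rw [← hPf, ← hPd, swap_prod, hAfcard, hAdcard]
  have hsign : ((-1 : Ω) ^ (m * n)) = 1 := hmn.neg_one_pow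
  rw [hsign, one_mul] at hswap
  -- exponent arithmetic: ((q-1)/2) * ∑ q^i = q^k / 2
  have hexp : ∀ k : ℕ, ((q - 1) / 2) * (∑ i ∈ Finset.range k, q ^ i) = q ^ k / 2 := by
    intro k
    have hgeo := geom_aux q (le_of_lt hq1) k
    obtain ⟨r, hr⟩ := id hq
    have h2 : 2 * (((q - 1) / 2) * (∑ i ∈ Finset.range k, q ^ i))
        = (q - 1) * (∑ i ∈ Finset.range k, q ^ i) := by
      rw [← mul_assoc]
      congr 1
      omega
    have hodd : Odd (q ^ k) := hq.pow
    obtain ⟨t, ht⟩ := hodd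
    set E := ∑ i ∈ Finset.range k, q ^ i
    set C := ((q - 1) / 2) * E with hC
    have h1 : 1 ≤ q ^ k := Nat.one_le_pow _ _ (by omega)
    omega
  -- final identity
  have hkey : (aeval a₀ d) ^ (q ^ m / 2) = (aeval b₀ f) ^ (q ^ n / 2) := by
    rw [← hexp m, ← hexp n, mul_comm ((q-1)/2) (∑ i ∈ Finset.range m, q ^ i),
      mul_comm ((q-1)/2) (∑ i ∈ Finset.range n, q ^ i), pow_mul, pow_mul, hswap]
  have hiff : IsSquare ((AdjoinRoot.mk f) d) ↔ IsSquare ((AdjoinRoot.mk d) f) := by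
    rw [hsqf, hsqd, hkey]
  have hiff' : IsSquare (Ideal.Quotient.mk (Ideal.span {f}) d) ↔
      IsSquare (Ideal.Quotient.mk (Ideal.span {d}) f) := hiff
  -- conclude
  have hprod : legSym F f d * legSym F d f = 1 := by
    by_cases hc : IsSquare (Ideal.Quotient.mk (Ideal.span {f}) d)
    · simp [legSym, hc, hiff'.mp hc]
    · simp [legSym, hc, (not_iff_not.mpr hiff').mp hc]
  refine ⟨?_, hprod, hiff'⟩
  rw [hprod]
  have : Even (((q - 1) / 2) * m * n) := by
    rw [mul_assoc]
    exact hmn.mul_left _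
  rw [this.neg_one_pow]
end
end

section
/- Let q be an odd prime power. For c ∈ F_q(t), the statement 'c is a square in F_q((1/t))' is equivalent to the existential statement over F_q(t): ∃ f, deg(f²) ≥ deg(t·(c - f²)). -/
open Quaternion HahnSeries IsDedekindDomain Polynomial Multiplicative
noncomputable section

/-- `deg A ≥ deg B` in the sense `v_∞(B/A) ≥ 0` (with `deg 0 = -∞`). -/
def DegGe (F : Type) [Field F] (A B : RatFunc F) : Prop :=
  B = 0 ∨ (A ≠ 0 ∧ (B / A).intDegree ≤ 0)

namespace Stmt14Aux

variable {F : Type} [Field F]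

lemma smod_iff (n : ℕ) (f g : PowerSeries F) :
    f ≡ g [SMOD ((Ideal.span {(PowerSeries.X : PowerSeries F)}) ^ n • ⊤ :
      Submodule (PowerSeries F) (PowerSeries F))] ↔
      ∀ i < n, PowerSeries.coeff i f = PowerSeries.coeff i g := by
  rw [SModEq.sub_mem]
  rw [show ((Ideal.span {(PowerSeries.X : PowerSeries F)}) ^ n • ⊤ :
      Submodule (PowerSeries F) (PowerSeries F)) =
      ((Ideal.span {(PowerSeries.X : PowerSeries F)}) ^ n : Ideal (PowerSeries F)) by
    rw [Ideal.smul_eq_mul, Ideal.mul_top]]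
  rw [Ideal.span_singleton_pow, Ideal.mem_span_singleton, PowerSeries.X_pow_dvd_iff]
  constructor
  · intro h i hi
    have := h i hi
    rw [map_sub, sub_eq_zero] at this
    exact this
  · intro h i hi
    rw [map_sub, sub_eq_zero]
    exact h i hi

instance : IsHausdorff (Ideal.span {(PowerSeries.X : PowerSeries F)}) (PowerSeries F) where
  haus' := by
    intro x hx
    ext n
    have := (smod_iff (n + 1) x 0).1 (hx (n + 1)) n (Nat.lt_succ_self n)
    simpa using this

instance : IsPrecomplete (Ideal.span {(PowerSeries.X : PowerSeries F)}) (PowerSeries F) where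
  prec' := by
    intro f hf
    refine ⟨PowerSeries.mk fun n => PowerSeries.coeff n (f (n + 1)), fun n => ?_⟩
    rw [smod_iff]
    intro i hi
    rw [PowerSeries.coeff_mk]
    have := (smod_iff (i + 1) (f (i + 1)) (f n)).1 (hf (Nat.succ_le_of_lt hi))
    exact (this i (Nat.lt_succ_self i)).symm

instance : IsAdicComplete (Ideal.span {(PowerSeries.X : PowerSeries F)}) (PowerSeries F) where

lemma isSquare_powerSeries (h2 : (2 : F) ≠ 0) (u : PowerSeries F)
    (hu : PowerSeries.constantCoeff u = 1) : IsSquare u := by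
  set I : Ideal (PowerSeries F) := Ideal.span {(PowerSeries.X : PowerSeries F)} with hI
  have h2u : IsUnit (2 : PowerSeries F) := by
    rw [PowerSeries.isUnit_iff_constantCoeff]
    rw [map_ofNat]
    exact h2.isUnit
  obtain ⟨a, ha, -⟩ := HenselianRing.is_henselian (R := PowerSeries F) (I := I)
    (Polynomial.X ^ 2 - Polynomial.C u) (Polynomial.monic_X_pow_sub_C u two_ne_zero) 1
    (by
      rw [Ideal.mem_span_singleton, PowerSeries.X_dvd_iff]
      simp [hu])
    (by
      have : ((Polynomial.X ^ 2 - Polynomial.C u : Polynomial (PowerSeries F)).derivative).eval 1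
          = 2 := by
        simp [Polynomial.derivative_sub, Polynomial.derivative_X_pow, one_add_one_eq_two]
      rw [this]
      exact h2u.map _)
  refine ⟨a, ?_⟩
  have : a ^ 2 - u = 0 := by simpa using ha
  rw [← sq, eq_comm, ← sub_eq_zero]
  exact this

lemma isSquare_one_add (h2 : (2 : F) ≠ 0) (s : LaurentSeries F)
    (hs : 1 ≤ s.order) (hs0 : s ≠ 0) : IsSquare (1 + s) := by
  set z : LaurentSeries F := 1 + s with hz
  have hc0 : z.coeff 0 = 1 := by
    have : s.coeff 0 = 0 := HahnSeries.coeff_eq_zero_of_lt_order (by omega)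
    simp [hz, this, HahnSeries.coeff_one]
  have hz0 : z ≠ 0 := fun h => by simp [h] at hc0
  have hord : z.order = 0 := by
    have hle : z.order ≤ 0 := HahnSeries.order_le_of_coeff_ne_zero (by rw [hc0]; exact one_ne_zero)
    have hge : 0 ≤ z.order := by
      by_contra h
      push_neg at h
      have hcoeff := (HahnSeries.coeff_order_eq_zero.not.mpr hz0)
      have h1 : (1 : LaurentSeries F).coeff z.order = 0 := by
        rw [HahnSeries.coeff_one, if_neg (by omega)]
      have h2' : s.coeff z.order = 0 := HahnSeries.coeff_eq_zero_of_lt_order (by omega)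
      refine hcoeff ?_
      have hzc : z.coeff z.order = (1 : LaurentSeries F).coeff z.order + s.coeff z.order := by
        rw [hz, HahnSeries.coeff_add]
      rw [hzc, h1, h2', add_zero]
    omega
  have hup : (HahnSeries.ofPowerSeries ℤ F) z.powerSeriesPart = z := by
    have := z.single_order_mul_powerSeriesPart
    rwa [hord, HahnSeries.single_zero_one, one_mul] at this
  have hcu : PowerSeries.constantCoeff z.powerSeriesPart = 1 := by
    have h := z.powerSeriesPart_coeff 0
    rw [hord, Nat.cast_zero, add_zero, hc0, PowerSeries.coeff_zero_eq_constantCoeff] at h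
    exact h
  obtain ⟨w, hw⟩ := isSquare_powerSeries h2 z.powerSeriesPart hcu
  exact ⟨(HahnSeries.ofPowerSeries ℤ F) w, by rw [← hup, hw, map_mul]⟩

section Phi

variable (φ : RatFunc F →+* LaurentSeries F)
variable (hφc : ∀ x : F, φ (algebraMap F (RatFunc F) x) = HahnSeries.single (0 : ℤ) x)
variable (hφX : φ RatFunc.X * HahnSeries.single (1 : ℤ) (1 : F) = 1)

lemma single_zpow (m : ℤ) :
    (HahnSeries.single (1 : ℤ) (1 : F) : LaurentSeries F) ^ m = HahnSeries.single m 1 := by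
  have hmul : ∀ a b : ℤ, (HahnSeries.single a (1 : F) : LaurentSeries F) *
      HahnSeries.single b 1 = HahnSeries.single (a + b) 1 := by
    intro a b
    rw [HahnSeries.single_mul_single, one_mul]
  cases m with
  | ofNat n =>
    rw [Int.ofNat_eq_coe, zpow_natCast, HahnSeries.single_pow, one_pow, nsmul_eq_mul, mul_one]
  | negSucc n =>
    rw [zpow_negSucc, HahnSeries.single_pow, one_pow, nsmul_eq_mul, mul_one]
    refine inv_eq_of_mul_eq_one_right ?_
    rw [hmul, show (((n + 1 : ℕ) : ℤ)) + Int.negSucc n = 0 by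
      rw [Int.negSucc_eq]; push_cast; ring, HahnSeries.single_zero_one]

include hφX in
lemma phi_X : φ RatFunc.X = HahnSeries.single (-1 : ℤ) 1 := by
  have h := congrArg (· * (HahnSeries.single (-1 : ℤ) (1 : F) : LaurentSeries F)) hφX
  simp only [mul_assoc, HahnSeries.single_mul_single, one_mul, add_neg_cancel,
    HahnSeries.single_zero_one, mul_one] at h
  exact h

include hφc hφX in
lemma phi_poly_coeff (p : Polynomial F) (n : ℤ) :
    (φ (algebraMap (Polynomial F) (RatFunc F) p)).coeff n =
      if 0 ≤ -n then p.coeff (-n).toNat else 0 := by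
  induction p using Polynomial.induction_on' with
  | add p q hp hq =>
    rw [map_add, map_add, HahnSeries.coeff_add, hp, hq]
    split <;> simp
  | monomial m a =>
    have : algebraMap (Polynomial F) (RatFunc F) (Polynomial.monomial m a) =
        algebraMap F (RatFunc F) a * RatFunc.X ^ m := by
      rw [← Polynomial.C_mul_X_pow_eq_monomial, map_mul, map_pow]
      rw [RatFunc.algebraMap_C, RatFunc.algebraMap_X]
      rfl
    rw [this, map_mul, map_pow, hφc, phi_X φ hφX, HahnSeries.single_pow, one_pow,
      HahnSeries.single_mul_single, mul_one, nsmul_eq_mul, mul_neg_one]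
    rw [HahnSeries.coeff_single]
    rcases eq_or_ne n (0 + -(m : ℤ)) with h | h
    · rw [if_pos h, if_pos (by omega)]
      rw [show (-n).toNat = m by omega, Polynomial.coeff_monomial, if_pos rfl]
    · rw [if_neg h]
      split
      · rw [Polynomial.coeff_monomial, if_neg (by omega)]
      · rfl

include hφc hφX in
lemma phi_poly_order (p : Polynomial F) (hp : p ≠ 0) :
    (φ (algebraMap (Polynomial F) (RatFunc F) p)).order = -(p.natDegree : ℤ) := by
  have hinj : Function.Injective φ := φ.injective
  have hne : φ (algebraMap (Polynomial F) (RatFunc F) p) ≠ 0 := by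
    intro h
    apply hp
    have h1 := hinj (h.trans (map_zero φ).symm)
    have h2 : algebraMap (Polynomial F) (RatFunc F) p = algebraMap (Polynomial F) (RatFunc F) 0 := by
      rw [map_zero]; exact h1
    exact RatFunc.algebraMap_injective F h2
  apply le_antisymm
  · apply HahnSeries.order_le_of_coeff_ne_zero
    rw [phi_poly_coeff φ hφc hφX, if_pos (by omega)]
    rw [show (-(-(p.natDegree:ℤ))).toNat = p.natDegree by omega]
    exact Polynomial.leadingCoeff_ne_zero.mpr hp
  · have hcoeff := (HahnSeries.coeff_order_eq_zero.not.mpr hne)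
    rw [phi_poly_coeff φ hφc hφX] at hcoeff
    by_contra h
    push_neg at h
    rcases le_or_gt 0 (-(φ (algebraMap (Polynomial F) (RatFunc F) p)).order) with hle | hlt
    · rw [if_pos hle] at hcoeff
      have := Polynomial.le_natDegree_of_ne_zero hcoeff
      omega
    · rw [if_neg (by omega)] at hcoeff
      exact hcoeff rfl

include hφc hφX in
lemma phi_order (h : RatFunc F) (hh : h ≠ 0) : (φ h).order = -h.intDegree := by
  have hd : (h.denom : Polynomial F) ≠ 0 := h.denom_ne_zero
  have hn : h.num ≠ 0 := RatFunc.num_ne_zero hh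
  have hd0 : algebraMap (Polynomial F) (RatFunc F) h.denom ≠ 0 := by
    intro h0
    apply hd
    have : algebraMap (Polynomial F) (RatFunc F) h.denom
        = algebraMap (Polynomial F) (RatFunc F) 0 := by rw [map_zero]; exact h0
    exact RatFunc.algebraMap_injective F this
  have key : h * algebraMap (Polynomial F) (RatFunc F) h.denom =
      algebraMap (Polynomial F) (RatFunc F) h.num := by
    have h1 := RatFunc.num_div_denom h
    rw [div_eq_iff hd0] at h1
    exact h1.symm
  have hφh : φ h ≠ 0 := fun hc => hh (φ.injective (hc.trans (map_zero φ).symm))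
  have hφd : φ (algebraMap (Polynomial F) (RatFunc F) h.denom) ≠ 0 := fun hc =>
    hd0 (φ.injective (hc.trans (map_zero φ).symm))
  have := congrArg (fun x => HahnSeries.order x) (congrArg φ key)
  simp only [map_mul] at this
  rw [HahnSeries.order_mul hφh hφd, phi_poly_order φ hφc hφX _ hd,
    phi_poly_order φ hφc hφX _ hn] at this
  rw [RatFunc.intDegree]
  omega

end Phi

end Stmt14Aux

open Stmt14Aux in
/-- For `c ∈ F_q(t)`, `c` is a square in `F_q((1/t))` (embedded via `φ` with `φ t = X⁻¹`)
iff `∃ f, deg(f²) ≥ deg(t·(c - f²))`. -/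
theorem stmt14 (F : Type) [Field F] [Fintype F] (hq : Odd (Fintype.card F))
    (φ : RatFunc F →+* LaurentSeries F)
    (hφc : ∀ x : F, φ (algebraMap F (RatFunc F) x) = HahnSeries.single (0 : ℤ) x)
    (hφX : φ RatFunc.X * HahnSeries.single (1 : ℤ) (1 : F) = 1)
    (c : RatFunc F) :
    IsSquare (φ c) ↔ ∃ f : RatFunc F, DegGe F (f ^ 2) (RatFunc.X * (c - f ^ 2)) := by
  have h2 : (2 : F) ≠ 0 := by
    refine Ring.two_ne_zero ?_
    intro hchar
    have := FiniteField.even_card_of_char_two hchar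
    rw [Nat.odd_iff] at hq
    omega
  have hinj : Function.Injective φ := φ.injective
  have hXne : (RatFunc.X : RatFunc F) ≠ 0 := RatFunc.X_ne_zero
  constructor
  · rintro ⟨g, hg⟩
    rcases eq_or_ne c 0 with rfl | hc
    · exact ⟨0, Or.inl (by simp)⟩
    have hφc0 : φ c ≠ 0 := fun h => hc (hinj (h.trans (map_zero φ).symm))
    have hg0 : g ≠ 0 := by rintro rfl; rw [mul_zero] at hg; exact hφc0 hg
    set e := g.order with he
    set a := g.coeff e with ha
    have ha0 : a ≠ 0 := (HahnSeries.coeff_order_eq_zero.not.mpr hg0)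
    set f : RatFunc F := algebraMap F (RatFunc F) a * RatFunc.X ^ (-e) with hf
    have hf0 : f ≠ 0 := by
      apply mul_ne_zero
      · simpa using ha0
      · exact zpow_ne_zero _ hXne
    have hφf : φ f = HahnSeries.single e a := by
      rw [hf, map_mul, hφc, map_zpow₀, phi_X φ hφX,
        show (HahnSeries.single (-1:ℤ) (1:F) : LaurentSeries F) =
          (HahnSeries.single (1:ℤ) (1:F)) ^ (-1 : ℤ) by rw [single_zpow],
        ← zpow_mul, show (-1 : ℤ) * (-e) = e by ring, single_zpow,
        HahnSeries.single_mul_single, zero_add, mul_one]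
    by_cases hcf : c - f ^ 2 = 0
    · exact ⟨f, Or.inl (by rw [hcf, mul_zero])⟩
    refine ⟨f, Or.inr ⟨pow_ne_zero 2 hf0, ?_⟩⟩
    set h₁ : LaurentSeries F := g - HahnSeries.single e a with hh₁
    set h₂ : LaurentSeries F := g + HahnSeries.single e a with hh₂
    have hsub : φ (c - f ^ 2) = h₁ * h₂ := by
      rw [map_sub, map_pow, hφf, hg, hh₁, hh₂]; ring
    have hlow : ∀ n : ℤ, n < e → g.coeff n = 0 := fun n hn =>
      HahnSeries.coeff_eq_zero_of_lt_order hn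
    have hh₁0 : h₁ ≠ 0 := by
      intro h0
      rw [hh₁, sub_eq_zero] at h0
      apply hcf
      rw [sub_eq_zero]
      apply hinj
      rw [hg, map_pow, hφf, h0, sq]
    have hord1 : e + 1 ≤ h₁.order := by
      by_contra hcon
      push_neg at hcon
      have hcoeff := (HahnSeries.coeff_order_eq_zero.not.mpr hh₁0)
      apply hcoeff
      rcases eq_or_lt_of_le (show h₁.order ≤ e by omega) with heq | hlt
      · rw [hh₁, HahnSeries.coeff_sub, heq, HahnSeries.coeff_single_same, ← ha, sub_self]
      · rw [hh₁, HahnSeries.coeff_sub, hlow _ hlt,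
          HahnSeries.coeff_single_of_ne (ne_of_lt hlt), sub_zero]
    have hh₂0 : h₂ ≠ 0 := by
      intro h0
      have := congrArg (fun x : LaurentSeries F => x.coeff e) h0
      simp only [hh₂, HahnSeries.coeff_add, HahnSeries.coeff_single_same, ← ha,
        HahnSeries.coeff_zero] at this
      rw [← two_mul] at this
      exact mul_ne_zero h2 ha0 this
    have hord2 : e ≤ h₂.order := by
      by_contra hcon
      push_neg at hcon
      have hcoeff := (HahnSeries.coeff_order_eq_zero.not.mpr hh₂0)
      apply hcoeff
      rw [hh₂, HahnSeries.coeff_add, hlow _ hcon,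
        HahnSeries.coeff_single_of_ne (ne_of_lt hcon), add_zero]
    have hordsub : 2 * e + 1 ≤ (φ (c - f ^ 2)).order := by
      rw [hsub, HahnSeries.order_mul hh₁0 hh₂0]
      omega
    have hdegsub : (c - f ^ 2).intDegree ≤ -(2 * e + 1) := by
      have := phi_order φ hφc hφX (c - f ^ 2) hcf
      omega
    have hdegf : f.intDegree = -e := by
      have := phi_order φ hφc hφX f hf0
      rw [hφf, HahnSeries.order_single ha0] at this
      omega
    have hdegf2 : (f ^ 2).intDegree = -(2 * e) := by
      rw [sq, RatFunc.intDegree_mul hf0 hf0, hdegf]; ring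
    have hB0 : RatFunc.X * (c - f ^ 2) ≠ 0 := mul_ne_zero hXne hcf
    have hBA0 : RatFunc.X * (c - f ^ 2) / f ^ 2 ≠ 0 :=
      div_ne_zero hB0 (pow_ne_zero 2 hf0)
    have hkey : (RatFunc.X * (c - f ^ 2) / f ^ 2).intDegree + (f ^ 2).intDegree
        = (RatFunc.X * (c - f ^ 2)).intDegree := by
      rw [← RatFunc.intDegree_mul hBA0 (pow_ne_zero 2 hf0),
        div_mul_cancel₀ _ (pow_ne_zero 2 hf0)]
    have hdegB : (RatFunc.X * (c - f ^ 2)).intDegree ≤ -(2 * e) := by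
      rw [RatFunc.intDegree_mul hXne hcf, RatFunc.intDegree_X]
      omega
    omega
  · rintro ⟨f, hdeg | ⟨hA, hle⟩⟩
    · have hcf : c = f ^ 2 := by
        have := (mul_eq_zero.mp hdeg).resolve_left hXne
        rwa [sub_eq_zero] at this
      exact ⟨φ f, by rw [hcf, map_pow, sq]⟩
    · rcases eq_or_ne (c - f ^ 2) 0 with hcf | hcf
      · rw [sub_eq_zero] at hcf
        exact ⟨φ f, by rw [hcf, map_pow, sq]⟩
      set r : RatFunc F := (c - f ^ 2) / f ^ 2 with hr
      have hr0 : r ≠ 0 := div_ne_zero hcf hA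
      have hXr : RatFunc.X * (c - f ^ 2) / f ^ 2 = RatFunc.X * r := by
        rw [hr, mul_div_assoc]
      have hdegr : r.intDegree ≤ -1 := by
        rw [hXr, RatFunc.intDegree_mul hXne hr0, RatFunc.intDegree_X] at hle
        omega
      have hordr : 1 ≤ (φ r).order := by
        have := phi_order φ hφc hφX r hr0
        omega
      have hφr0 : φ r ≠ 0 := fun h => hr0 (hinj (h.trans (map_zero φ).symm))
      obtain ⟨w, hw⟩ := isSquare_one_add h2 (φ r) hordr hφr0
      have hcr : c = f ^ 2 * (1 + r) := by
        rw [hr, mul_add, mul_one, mul_div_assoc', mul_div_cancel_left₀ _ hA]; ring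
      refine ⟨φ f * w, ?_⟩
      rw [hcr, map_mul, map_pow, map_add, map_one, hw]
      ring

end
end

section
/- Let q be an odd prime power and f(t) ∈ F_q[t] monic irreducible of even degree. Choose monic irreducible d(t) of odd degree with d(t) ≡ c(t) mod f(t), where c(t) is a nonsquare in F_q[t]/(f(t)). Then the Legendre symbols satisfy (z/d) = -1 for any nonsquare z ∈ F_q, (f/d) = -1, and hence (z·f(t)/d(t)) = 1. -/
open Quaternion HahnSeries IsDedekindDomain Polynomial Multiplicative
noncomputable section

set_option linter.unusedSectionVars false
set_option linter.deprecated false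

section AuxRecip
variable {F : Type} [Field F] [Fintype F]

/-- Frobenius commutes with evaluation of polynomials with coefficients in a finite field. -/
lemma frob_aeval {S : Type*} [CommRing S] [Nontrivial S] [Algebra F S]
    (g : Polynomial F) (x : S) (k : ℕ) :
    (aeval x g) ^ (Fintype.card F) ^ k = aeval (x ^ (Fintype.card F) ^ k) g := by
  obtain ⟨n, hp, hcard⟩ := FiniteField.card F (ringChar F)
  haveI : CharP S (ringChar F) :=
    charP_of_injective_algebraMap (algebraMap F S).injective (ringChar F)
  haveI := Fact.mk hp
  haveI : ExpChar S (ringChar F) := ExpChar.prime hp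
  have hφ : ∀ y : S, iterateFrobenius S (ringChar F) ((n : ℕ) * k) y
      = y ^ (Fintype.card F) ^ k := by
    intro y
    rw [iterateFrobenius_def, pow_mul, ← hcard]
  calc (aeval x g) ^ (Fintype.card F) ^ k
      = iterateFrobenius S (ringChar F) ((n : ℕ) * k) (eval₂ (algebraMap F S) x g) := by
        rw [hφ, aeval_def]
    _ = eval₂ ((iterateFrobenius S (ringChar F) ((n : ℕ) * k)).comp (algebraMap F S))
          (iterateFrobenius S (ringChar F) ((n : ℕ) * k) x) g := hom_eval₂ _ _ _ _
    _ = aeval (x ^ (Fintype.card F) ^ k) g := by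
        rw [aeval_def]
        congr 1
        · ext c
          simp only [RingHom.comp_apply]
          rw [hφ, ← map_pow, FiniteField.pow_card_pow]
        · exact hφ x

/-- The roots of an irreducible `p` in the algebraic closure are the Frobenius orbit of one. -/
lemma orbit_roots (p : Polynomial F) (hm : p.Monic) (hi : Irreducible p)
    (ε : AdjoinRoot p →ₐ[F] AlgebraicClosure F) :
    (p.map (algebraMap F (AlgebraicClosure F))).roots
      = (Multiset.range p.natDegree).map
          (fun i => ε (AdjoinRoot.root p) ^ Fintype.card F ^ i) := by
  haveI := Fact.mk hi
  set q := Fintype.card F with hq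
  set m := p.natDegree with hm'
  set Ω := AlgebraicClosure F
  set K := AdjoinRoot p
  set β : K := AdjoinRoot.root p with hβ
  have hq2 : 2 ≤ q := Fintype.one_lt_card
  let pb : PowerBasis F K := AdjoinRoot.powerBasis hi.ne_zero
  haveI : Fintype K := Module.fintypeOfFintype pb.basis
  have hcardK : Fintype.card K = q ^ m := by
    rw [Module.card_eq_pow_finrank (K := F) (V := K), pb.finrank,
      AdjoinRoot.powerBasis_dim]
  have hmpos : 0 < m := hi.natDegree_pos
  have εinj : Function.Injective ε := ε.toRingHom.injective
  -- each orbit element is a root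
  have hβroot : aeval β p = 0 := by rw [AdjoinRoot.aeval_eq, AdjoinRoot.mk_self]
  have hroot0 : aeval (ε β) p = 0 := by
    rw [Polynomial.aeval_algHom_apply, hβroot, map_zero]
  have horbit : ∀ i : ℕ, aeval (ε β ^ q ^ i) p = 0 := by
    intro i
    rw [← frob_aeval, hroot0, zero_pow (pow_ne_zero _ (by omega))]
  -- injectivity of the orbit map on `range m`
  have hfix : ∀ k, 0 < k → k < m → β ^ q ^ k ≠ β := by
    intro k hk0 hkm hfix
    have hall : ∀ x : K, x ^ q ^ k = x := by
      intro x
      obtain ⟨g, rfl⟩ := AdjoinRoot.mk_surjective x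
      rw [← AdjoinRoot.aeval_eq, frob_aeval, hfix]
    -- counting contradiction
    have hne : (X ^ q ^ k - X : Polynomial K) ≠ 0 :=
      FiniteField.X_pow_card_pow_sub_X_ne_zero K (by omega) hq2
    have hdeg : (X ^ q ^ k - X : Polynomial K).natDegree = q ^ k :=
      FiniteField.X_pow_card_pow_sub_X_natDegree_eq K (by omega) hq2
    have hsub : Finset.univ ⊆ (X ^ q ^ k - X : Polynomial K).roots.toFinset := by
      intro x _
      rw [Multiset.mem_toFinset, mem_roots hne]
      simp [hall x]
    have h1 : Fintype.card K ≤ q ^ k := by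
      calc Fintype.card K ≤ (X ^ q ^ k - X : Polynomial K).roots.toFinset.card :=
            Finset.card_le_card hsub
        _ ≤ Multiset.card (X ^ q ^ k - X : Polynomial K).roots :=
            Multiset.toFinset_card_le _
        _ ≤ (X ^ q ^ k - X : Polynomial K).natDegree := Polynomial.card_roots' _
        _ = q ^ k := hdeg
    rw [hcardK] at h1
    exact absurd h1 (not_le.mpr (Nat.pow_lt_pow_right (by omega) hkm))
  have hβqm : β ^ q ^ m = β := by rw [← hcardK]; exact FiniteField.pow_card β
  have hinj : ∀ i ∈ Multiset.range m, ∀ j ∈ Multiset.range m,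
      ε β ^ q ^ i = ε β ^ q ^ j → i = j := by
    intro i hi' j hj' hij
    rw [Multiset.mem_range] at hi' hj'
    by_contra hne
    wlog hlt : i < j generalizing i j
    · exact this j hj' i hi' hij.symm (Ne.symm hne) (by omega)
    have hβij : β ^ q ^ i = β ^ q ^ j := εinj (by rw [← map_pow, ← map_pow] at hij; exact hij)
    have : β ^ q ^ (i + (m - j)) = β := by
      have := congrArg (fun y : K => y ^ q ^ (m - j)) hβij
      simp only [← pow_mul, ← _root_.pow_add] at this
      rw [this]
      have : j + (m - j) = m := by omega
      rw [this, hβqm]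
    exact hfix (i + (m - j)) (by omega) (by omega) this
  -- the orbit multiset
  set M : Multiset Ω := (Multiset.range m).map (fun i => ε β ^ q ^ i) with hM
  have hMnodup : M.Nodup := (Multiset.nodup_range m).map_on hinj
  have hMsub : M ⊆ (p.map (algebraMap F Ω)).roots := by
    intro x hx
    rw [hM, Multiset.mem_map] at hx
    obtain ⟨i, _, rfl⟩ := hx
    rw [mem_roots (hm.map _).ne_zero, IsRoot, eval_map, ← aeval_def]
    exact horbit i
  have hcardroots : Multiset.card (p.map (algebraMap F Ω)).roots = m := by
    rw [← (IsAlgClosed.splits (p.map (algebraMap F Ω))).natDegree_eq_card_roots, natDegree_map]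
  refine (Multiset.eq_of_le_of_card_le ((Multiset.le_iff_subset hMnodup).2 hMsub) ?_).symm
  rw [hcardroots, hM, Multiset.card_map, Multiset.card_range]


/-- Product of `g` evaluated at the roots of `p` equals a Frobenius-norm power. -/
lemma prod_aeval_roots (p : Polynomial F) (hm : p.Monic) (hi : Irreducible p)
    (ε : AdjoinRoot p →ₐ[F] AlgebraicClosure F) (g : Polynomial F) :
    ((p.map (algebraMap F (AlgebraicClosure F))).roots.map (fun b => aeval b g)).prod
      = ε (aeval (AdjoinRoot.root p) g)
          ^ (∑ i ∈ Finset.range p.natDegree, Fintype.card F ^ i) := by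
  rw [orbit_roots p hm hi ε, Multiset.map_map]
  have : ∀ i ∈ Multiset.range p.natDegree,
      (aeval (ε (AdjoinRoot.root p) ^ Fintype.card F ^ i) g : AlgebraicClosure F)
        = ε (aeval (AdjoinRoot.root p) g) ^ Fintype.card F ^ i := by
    intro i _
    rw [← frob_aeval, Polynomial.aeval_algHom_apply]
  rw [show ((fun b => aeval b g) ∘ fun i => ε (AdjoinRoot.root p) ^ Fintype.card F ^ i)
      = fun i => (aeval (ε (AdjoinRoot.root p) ^ Fintype.card F ^ i) g : AlgebraicClosure F)
    from rfl, Multiset.map_congr rfl this, ← Finset.range_val, ← Finset.prod,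
    Finset.prod_pow_eq_pow_sum]

/-- The reciprocity-style swap of root products. -/
lemma prod_swap (f d : Polynomial F) (hfm : f.Monic) (hdm : d.Monic) :
    ((d.map (algebraMap F (AlgebraicClosure F))).roots.map (fun b => aeval b f)).prod
      = (-1 : AlgebraicClosure F) ^ (d.natDegree * f.natDegree) *
        ((f.map (algebraMap F (AlgebraicClosure F))).roots.map (fun a => aeval a d)).prod := by
  set Ω := AlgebraicClosure F
  set ι := algebraMap F Ω
  set rd := (d.map ι).roots with hrd
  set rf := (f.map ι).roots with hrf
  have heval : ∀ (p : Polynomial F), p.Monic → ∀ b : Ω,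
      aeval b p = ((p.map ι).roots.map (fun a => b - a)).prod := by
    intro p hp b
    conv_lhs => rw [aeval_def, ← eval_map,
      (IsAlgClosed.splits (p.map ι)).eq_prod_roots_of_monic (hp.map ι)]
    rw [eval_multiset_prod, Multiset.map_map]
    simp
  have hcards : Multiset.card rd = d.natDegree :=
    (IsAlgClosed.splits (d.map ι)).natDegree_eq_card_roots.symm.trans (natDegree_map ι)
  have hcardsf : Multiset.card rf = f.natDegree :=
    (IsAlgClosed.splits (f.map ι)).natDegree_eq_card_roots.symm.trans (natDegree_map ι)
  calc (rd.map (fun b => aeval b f)).prod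
      = (rd.map (fun b => (rf.map (fun a => b - a)).prod)).prod := by
        rw [Multiset.map_congr rfl (fun b _ => heval f hfm b)]
    _ = (rf.map (fun a => (rd.map (fun b => b - a)).prod)).prod :=
        Multiset.prod_map_prod_map rd rf
    _ = (rf.map (fun a => (-1 : Ω) ^ d.natDegree * (rd.map (fun b => a - b)).prod)).prod := by
        refine congrArg _ (Multiset.map_congr rfl fun a _ => ?_)
        have : (rd.map (fun b => b - a)) = (rd.map (fun b => a - b)).map Neg.neg := by
          rw [Multiset.map_map]; exact Multiset.map_congr rfl (fun b _ => by simp)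
        rw [this, Multiset.prod_map_neg, Multiset.card_map, hcards]
    _ = (-1 : Ω) ^ (d.natDegree * f.natDegree) *
          (rf.map (fun a => (rd.map (fun b => a - b)).prod)).prod := by
        rw [Multiset.prod_map_mul, Multiset.map_const', Multiset.prod_replicate, ← pow_mul,
          hcardsf, mul_comm d.natDegree]
    _ = (-1 : Ω) ^ (d.natDegree * f.natDegree) *
          (rf.map (fun a => aeval a d)).prod := by
        rw [Multiset.map_congr rfl (fun a _ => (heval d hdm a).symm)]

end AuxRecip


/-- For `f` monic irreducible of even degree and `d` monic irreducible of odd degree with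
`d ≡ c mod f`, `c` a nonsquare mod `f`: `(z/d) = -1` for every nonsquare `z ∈ F_q`,
`(f/d) = -1`, and `(z·f/d) = 1`. -/
theorem stmt17 (F : Type) [Field F] [Fintype F] (hq : Odd (Fintype.card F))
    (f d c : Polynomial F) (hfm : f.Monic) (hfi : Irreducible f) (hfe : Even f.natDegree)
    (hdm : d.Monic) (hdi : Irreducible d) (hdo : Odd d.natDegree)
    (hdc : f ∣ (d - c)) (hc : ¬ IsSquare (Ideal.Quotient.mk (Ideal.span {f}) c)) :
    ∀ z : F, ¬ IsSquare z →
      legSym F d (C z) = -1 ∧ legSym F d f = -1 ∧ legSym F d (C z * f) = 1 := by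
  intro z hz
  haveI := Fact.mk hdi
  haveI := Fact.mk hfi
  set q := Fintype.card F with hqq
  set m := d.natDegree with hmm
  set n := f.natDegree with hnn
  set h := q / 2 with hhh
  have hq2 : 2 ≤ q := Fintype.one_lt_card
  have hqodd : q % 2 = 1 := Nat.odd_iff.mp hq
  have hcharF : ringChar F ≠ 2 := by
    rw [Ne, FiniteField.even_card_iff_char_two]; omega
  -- finite field structure on the two quotients
  let pbd : PowerBasis F (AdjoinRoot d) := AdjoinRoot.powerBasis hdi.ne_zero
  let pbf : PowerBasis F (AdjoinRoot f) := AdjoinRoot.powerBasis hfi.ne_zero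
  haveI : Fintype (AdjoinRoot d) := Module.fintypeOfFintype pbd.basis
  haveI : Fintype (AdjoinRoot f) := Module.fintypeOfFintype pbf.basis
  haveI : Module.Finite F (AdjoinRoot d) := pbd.finite
  haveI : Module.Finite F (AdjoinRoot f) := pbf.finite
  have hcardK : Fintype.card (AdjoinRoot d) = q ^ m := by
    rw [Module.card_eq_pow_finrank (K := F), pbd.finrank, AdjoinRoot.powerBasis_dim]
  have hcardL : Fintype.card (AdjoinRoot f) = q ^ n := by
    rw [Module.card_eq_pow_finrank (K := F), pbf.finrank, AdjoinRoot.powerBasis_dim]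
  have hcharK : ringChar (AdjoinRoot d) ≠ 2 := by
    rw [Ne, FiniteField.even_card_iff_char_two, hcardK]
    have := Nat.odd_iff.mp (hq.pow (n := m)); omega
  have hcharL : ringChar (AdjoinRoot f) ≠ 2 := by
    rw [Ne, FiniteField.even_card_iff_char_two, hcardL]
    have := Nat.odd_iff.mp (hq.pow (n := n)); omega
  -- arithmetic facts
  have hgeom : ∀ r : ℕ, 2 * (h * ∑ i ∈ Finset.range r, q ^ i) + 1 = q ^ r := by
    intro r
    induction r with
    | zero => simp
    | succ r ih =>
      calc 2 * (h * ∑ i ∈ Finset.range (r+1), q ^ i) + 1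
          = (2 * (h * ∑ i ∈ Finset.range r, q ^ i) + 1) + 2 * h * q ^ r := by
            rw [Finset.sum_range_succ]; ring
        _ = q ^ r + 2 * h * q ^ r := by rw [ih]
        _ = (2 * h + 1) * q ^ r := by ring
        _ = q ^ (r + 1) := by
            have : 2 * h + 1 = q := by omega
            rw [this, pow_succ, mul_comm]
  have hdiv : ∀ r : ℕ, q ^ r / 2 = (∑ i ∈ Finset.range r, q ^ i) * h := by
    intro r
    have h1 := hgeom r
    rw [mul_comm]
    generalize h * (∑ i ∈ Finset.range r, q ^ i) = a at h1 ⊢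
    generalize q ^ r = b at h1 ⊢
    omega
  have hSodd : ∀ r : ℕ, Odd r → Odd (∑ i ∈ Finset.range r, q ^ i) := by
    intro r hr
    rw [Nat.odd_iff, Finset.sum_nat_mod,
      Finset.sum_congr rfl (fun i _ => Nat.odd_iff.mp (hq.pow (n := i))),
      Finset.sum_const, smul_eq_mul, mul_one, Finset.card_range]
    exact Nat.odd_iff.mp hr
  have hm1K : (-1 : AdjoinRoot d) ≠ 1 := Ring.neg_one_ne_one_of_char_ne_two hcharK
  -- z is a nonsquare in F
  have hz0 : z ≠ 0 := fun h0 => hz ⟨0, by rw [h0, mul_zero]⟩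
  have hzpow : z ^ h = -1 := by
    rcases FiniteField.pow_dichotomy hcharF hz0 with h1 | h1
    · exact absurd ((FiniteField.isSquare_iff hcharF hz0).mpr h1) hz
    · exact h1
  -- Claim A : C z is a nonsquare mod d
  set w : AdjoinRoot d := AdjoinRoot.mk d (C z) with hwdef
  have hw : w = algebraMap F (AdjoinRoot d) z := by
    rw [hwdef, ← AdjoinRoot.aeval_eq, aeval_C]
  have hw0 : w ≠ 0 := fun hcon => hz0 (by rwa [hw, _root_.map_eq_zero] at hcon)
  have hwpow : w ^ (Fintype.card (AdjoinRoot d) / 2) = -1 := by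
    rw [hcardK, hdiv m, hw, ← map_pow, mul_comm, pow_mul, hzpow,
      Odd.neg_one_pow (hSodd m hdo), map_neg, map_one]
  have hwns : ¬ IsSquare w := by
    intro hsq
    have := (FiniteField.isSquare_iff hcharK hw0).mp hsq
    rw [hwpow] at this
    exact hm1K this
  -- Claim B : f is a nonsquare mod d
  have hfd : f ≠ d := by
    intro hfd
    apply Nat.not_odd_iff_even.mpr _ hdo
    rw [hmm, ← hfd]
    exact hfe
  set u : AdjoinRoot d := AdjoinRoot.mk d f with hudef
  have hu0 : u ≠ 0 := by
    rw [hudef, Ne, AdjoinRoot.mk_eq_zero]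
    intro hdvd
    exact hfd (eq_of_monic_of_associated hdm hfm (hdi.associated_of_dvd hfi hdvd)).symm
  -- embeddings into the algebraic closure
  let εK : AdjoinRoot d →ₐ[F] AlgebraicClosure F := IsAlgClosed.lift
  let εL : AdjoinRoot f →ₐ[F] AlgebraicClosure F := IsAlgClosed.lift
  have hPd := prod_aeval_roots d hdm hdi εK f
  have hPf := prod_aeval_roots f hfm hfi εL d
  have hswap := prod_swap f d hfm hdm
  -- d ≡ c mod f
  set v : AdjoinRoot f := AdjoinRoot.mk f c with hvdef
  have hvd : AdjoinRoot.mk f d = v := by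
    rw [hvdef, ← sub_eq_zero, ← map_sub, AdjoinRoot.mk_eq_zero]
    exact hdc
  have hvns : ¬ IsSquare v := hc
  have hv0 : v ≠ 0 := fun h0 => hvns (h0 ▸ ⟨0, (mul_zero 0).symm⟩)
  have hvpow : v ^ ((∑ i ∈ Finset.range n, q ^ i) * h) = -1 := by
    rw [← hdiv n, ← hcardL]
    rcases FiniteField.pow_dichotomy hcharL hv0 with h1 | h1
    · exact absurd ((FiniteField.isSquare_iff hcharL hv0).mpr h1) hvns
    · exact h1
  -- the key identity in the algebraic closure
  have hsign : ((-1 : AlgebraicClosure F) ^ (m * n)) = 1 :=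
    Even.neg_one_pow (hfe.mul_left m)
  have hkey1 : εK u ^ (∑ i ∈ Finset.range m, q ^ i)
      = εL v ^ (∑ i ∈ Finset.range n, q ^ i) := by
    rw [hudef, ← AdjoinRoot.aeval_eq, ← hPd, hswap, hsign, one_mul, hPf,
      AdjoinRoot.aeval_eq, hvd]
  have hupow : u ^ ((∑ i ∈ Finset.range m, q ^ i) * h) = -1 := by
    have hinj : Function.Injective εK := εK.toRingHom.injective
    apply hinj
    rw [map_pow, pow_mul, hkey1, ← pow_mul, ← map_pow, hvpow, map_neg, map_one,
      map_neg, map_one]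
  have hupow' : u ^ (Fintype.card (AdjoinRoot d) / 2) = -1 := by
    rw [hcardK, hdiv m]; exact hupow
  have huns : ¬ IsSquare u := by
    intro hsq
    have := (FiniteField.isSquare_iff hcharK hu0).mp hsq
    rw [hupow'] at this
    exact hm1K this
  -- Claim C : the product is a square
  set x : AdjoinRoot d := AdjoinRoot.mk d (Polynomial.C z * f) with hxdef
  have hxwu : x = w * u := by rw [hxdef, map_mul]
  have hx0 : x ≠ 0 := by rw [hxwu]; exact mul_ne_zero hw0 hu0
  have hxsq : IsSquare x := by
    apply (FiniteField.isSquare_iff hcharK hx0).mpr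
    rw [hxwu, mul_pow, hwpow, hupow', neg_one_mul, neg_neg]
  refine ⟨?_, ?_, ?_⟩ <;> unfold legSym <;> split_ifs with hsq
  · exact absurd hsq hwns
  · rfl
  · exact absurd hsq huns
  · rfl
  · rfl
  · exact absurd hxsq hsq
end
end
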